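/- arXiv:2507.07007 — 2 statements merged into one kernel-verified Lean document; each statement's English description precedes it below -/
import Mathlib

section
/- Let (m_1,r_1),…,(m_n,r_n) with m_i ∈ ℝ², r_i > 0, satisfy the geometric robustness condition: ∂h_{(m_i,r_i)} ∩ ∂h_{(m_j,r_j)} = ∅ for all i ≠ j, and each ∂h_{(m_i,r_i)} has exactly 0 or exactly 2 elements. Let H_v : S¹ → ℕ be the sum of the signal functions. Then the set ∂H_v := ⋃_{i=1}^n ∂h_{(m_i,r_i)} is finite and has exactly 2·(H_v* − H_{v*} + τ(H_v)) elements, where H_v* = max H_v, H_{v*} = min H_v. -/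
noncomputable section

open scoped BigOperators
open Classical

/-- The unit circle `S¹` in the plane (modeled as `ℂ ≅ ℝ²` with the Euclidean norm). -/
def S1 : Set ℂ := {x : ℂ | ‖x‖ = 1}

/-- The signal function `h_{(m,r)}`: indicator of the closed disk of center `m`, radius `r`. -/
def signal (m : ℂ) (r : ℝ) (x : ℂ) : ℕ := if ‖x - m‖ ≤ r then 1 else 0

/-- The boundary trace `∂h_{(m,r)} = {x ∈ S¹ : ‖x − m‖ = r}`. -/
def bTrace (m : ℂ) (r : ℝ) : Set ℂ := {x : ℂ | ‖x‖ = 1 ∧ ‖x - m‖ = r}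

/-- The sum `H_v` of the signal functions of the disk data `v = ((m_i, r_i))_{i<n}`. -/
def Hsum {n : ℕ} (v : Fin n → ℂ × ℝ) (x : ℂ) : ℕ := ∑ i, signal (v i).1 (v i).2 x

/-- Rotation of the plane by angle `t` about the origin. -/
def rot (t : ℝ) (x : ℂ) : ℂ := Complex.exp (t * Complex.I) * x

/-- `H(x⁺) = a`: `H` equals `a` just after `x` (counterclockwise). -/
def rightVal (H : ℂ → ℕ) (x : ℂ) (a : ℕ) : Prop :=
  ∃ δ > (0 : ℝ), ∀ t : ℝ, 0 < t → t < δ → H (rot t x) = a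

/-- `H(x⁻) = b`: `H` equals `b` just before `x`. -/
def leftVal (H : ℂ → ℕ) (x : ℂ) (b : ℕ) : Prop :=
  ∃ δ > (0 : ℝ), ∀ t : ℝ, -δ < t → t < 0 → H (rot t x) = b

/-- `H` is properly upper semicontinuous on `S¹`: at each point both one-sided limits
exist and the value equals their maximum. -/
def ProperlyUSC (H : ℂ → ℕ) : Prop :=
  ∀ x ∈ S1, ∃ a b : ℕ, rightVal H x a ∧ leftVal H x b ∧ H x = max a b

/-- `H* = max_{S¹} H`. -/
def maxOnS1 (H : ℂ → ℕ) : ℕ := sSup (H '' S1)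

/-- `H_* = min_{S¹} H`. -/
def minOnS1 (H : ℂ → ℕ) : ℕ := sInf (H '' S1)

/-- The superlevel set `{x ∈ S¹ : H(x) ≥ k}`. -/
def superlevel (H : ℂ → ℕ) (k : ℕ) : Set ℂ := {x ∈ S1 | k ≤ H x}

/-- Number of connected components of a subset of the plane. -/
def numCC (A : Set ℂ) : ℕ := Nat.card (ConnectedComponents ↥A)

/-- `τ(H) = Σ_{k=H_*+1}^{H*} (c_k(H) − 1)`. -/
def tau (H : ℂ → ℕ) : ℕ :=
  ∑ k ∈ Finset.Icc (minOnS1 H + 1) (maxOnS1 H), (numCC (superlevel H k) - 1)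

/-- `ρ` for the degrees-of-freedom count. -/
def rho (m : ℂ) (r : ℝ) : ℕ :=
  if bTrace m r = ∅ then 3
  else if (bTrace m r).ncard = 1 ∨ (bTrace m r).ncard = 2 then 1
  else 0

/-- `N`-degrees of freedom of a decomposition with `n ≤ N` signals. -/
def DoF (N : ℕ) {n : ℕ} (v : Fin n → ℂ × ℝ) : ℕ :=
  3 * (N - n) + ∑ i, rho (v i).1 (v i).2


namespace Stmt8
open Real Complex Set Filter

def e (θ : ℝ) : ℂ := Complex.exp (θ * Complex.I)

lemma e_norm (θ : ℝ) : ‖e θ‖ = 1 := by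
  simp [e, Complex.norm_exp_ofReal_mul_I]

lemma e_cont : Continuous e := by
  unfold e; fun_prop

lemma e_eq_iff {θ θ' : ℝ} : e θ = e θ' ↔ ∃ n : ℤ, θ = θ' + n * (2 * π) := by
  rw [e, e, Complex.exp_eq_exp_iff_exists_int]
  constructor
  · rintro ⟨n, h⟩
    refine ⟨n, ?_⟩
    have h' : (θ:ℂ) * Complex.I = (↑θ' + ↑n * (2 * ↑π)) * Complex.I := by
      linear_combination h
    have := mul_right_cancel₀ Complex.I_ne_zero h'
    exact_mod_cast this
  · rintro ⟨n, h⟩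
    exact ⟨n, by push_cast [h]; ring⟩

lemma e_periodic (θ : ℝ) (n : ℤ) : e (θ + n * (2 * π)) = e θ :=
  e_eq_iff.mpr ⟨n, rfl⟩

lemma e_injOn_Ico (a : ℝ) : ∀ θ ∈ Ico a (a + 2*π), ∀ θ' ∈ Ico a (a + 2*π),
    e θ = e θ' → θ = θ' := by
  intro θ hθ θ' hθ' h
  rcases e_eq_iff.mp h with ⟨n, hn⟩
  have h2π : (0:ℝ) < 2*π := by positivity
  have habs : |θ - θ'| < 2*π := by
    rw [abs_sub_lt_iff]
    obtain ⟨h1, h2⟩ := hθ; obtain ⟨h3, h4⟩ := hθ'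
    constructor <;> linarith
  have : |(n:ℝ)| * (2*π) < 2*π := by
    calc |(n:ℝ)| * (2*π) = |(n:ℝ) * (2*π)| := by rw [abs_mul, abs_of_pos h2π]
    _ = |θ - θ'| := by rw [hn]; ring_nf
    _ < 2*π := habs
  have hn0 : (n:ℤ) = 0 := by
    by_contra hne
    have : (1:ℝ) ≤ |(n:ℝ)| := by exact_mod_cast Int.one_le_abs (by exact_mod_cast hne)
    nlinarith
  rw [hn, hn0]; push_cast; ring

lemma e_surj {x : ℂ} (hx : ‖x‖ = 1) : e (Complex.arg x) = x := by
  have := Complex.norm_mul_exp_arg_mul_I x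
  rw [e]; rw [hx] at this; simpa using this

lemma e_exists_rep {x : ℂ} (hx : ‖x‖ = 1) (a : ℝ) :
    ∃ θ ∈ Ico a (a + 2*π), e θ = x := by
  have h2π : (0:ℝ) < 2*π := by positivity
  refine ⟨toIcoMod h2π a (Complex.arg x), toIcoMod_mem_Ico h2π a _, ?_⟩
  have : toIcoMod h2π a (Complex.arg x) = Complex.arg x + (-(toIcoDiv h2π a (Complex.arg x))) * (2*π) := by
    rw [toIcoMod]; push_cast; ring_nf
  rw [this]
  have hper := e_periodic (Complex.arg x) (-(toIcoDiv h2π a (Complex.arg x)))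
  push_cast at hper
  rw [hper, e_surj hx]


/-! ### Per-disk analysis -/

def dd (m : ℂ) (r : ℝ) (θ : ℝ) : ℝ := Complex.normSq (e θ - m) - r^2

lemma m_re (m : ℂ) : m.re = ‖m‖ * Real.cos (Complex.arg m) := by
  conv_lhs => rw [← Complex.norm_mul_cos_add_sin_mul_I m]
  simp

lemma m_im (m : ℂ) : m.im = ‖m‖ * Real.sin (Complex.arg m) := by
  conv_lhs => rw [← Complex.norm_mul_cos_add_sin_mul_I m]
  simp

lemma dd_eq (m : ℂ) (r : ℝ) (θ : ℝ) :
    dd m r θ = (1 + Complex.normSq m - r^2)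
      - 2 * (‖m‖) * Real.cos (θ - Complex.arg m) := by
  unfold dd
  rw [Complex.normSq_apply, Complex.normSq_apply]
  simp only [Complex.sub_re, Complex.sub_im]
  have h1 : (e θ).re = Real.cos θ := Complex.exp_ofReal_mul_I_re θ
  have h2 : (e θ).im = Real.sin θ := Complex.exp_ofReal_mul_I_im θ
  rw [h1, h2, m_re m, m_im m, Real.cos_sub]
  have := Real.sin_sq_add_cos_sq θ
  have := Real.sin_sq_add_cos_sq (Complex.arg m)
  nlinarith [this]

lemma dd_cont (m : ℂ) (r : ℝ) : Continuous (dd m r) := by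
  exact (Complex.continuous_normSq.comp (e_cont.sub continuous_const)).sub continuous_const

lemma signal_e {m : ℂ} {r : ℝ} (hr : 0 < r) (θ : ℝ) :
    signal m r (e θ) = if dd m r θ ≤ 0 then 1 else 0 := by
  unfold signal dd
  congr 1
  rw [eq_iff_iff, sub_nonpos, ← Complex.sq_norm]
  exact (pow_le_pow_iff_left₀ (norm_nonneg _) hr.le two_ne_zero).symm

lemma bTrace_e {m : ℂ} {r : ℝ} (hr : 0 < r) (θ : ℝ) :
    e θ ∈ bTrace m r ↔ dd m r θ = 0 := by
  unfold bTrace dd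
  simp only [mem_setOf_eq, e_norm, true_and, sub_eq_zero]
  rw [← Complex.sq_norm]
  exact (pow_left_inj₀ (norm_nonneg _) hr.le two_ne_zero).symm

lemma mem_bTrace_norm {m : ℂ} {r : ℝ} {x : ℂ} (hx : x ∈ bTrace m r) : ‖x‖ = 1 := hx.1

/-- Local constancy of a signal off its boundary trace. -/
lemma signal_loc_const {m : ℂ} {r : ℝ} (hr : 0 < r) {β : ℝ} (hβ : e β ∉ bTrace m r) :
    ∀ᶠ θ in nhds β, signal m r (e θ) = signal m r (e β) := by
  have hdd : dd m r β ≠ 0 := fun h => hβ ((bTrace_e hr β).mpr h)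
  rcases hdd.lt_or_gt with h | h
  · have hev : ∀ᶠ θ in nhds β, dd m r θ < 0 :=
      ((dd_cont m r).continuousAt).eventually_lt continuousAt_const h
    filter_upwards [hev] with θ hθ
    rw [signal_e hr, signal_e hr, if_pos hθ.le, if_pos h.le]
  · have hev : ∀ᶠ θ in nhds β, 0 < dd m r θ :=
      (continuousAt_const).eventually_lt ((dd_cont m r).continuousAt) h
    filter_upwards [hev] with θ hθ
    rw [signal_e hr, signal_e hr, if_neg (not_le.mpr hθ), if_neg (not_le.mpr h)]

/-- Gap lemma: around a point, a finite set only has the point itself nearby. -/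
lemma exists_gap {Z : Set ℝ} (hZ : Z.Finite) (β : ℝ) :
    ∃ δ > (0:ℝ), ∀ t ∈ Z, t ≠ β → δ ≤ |t - β| := by
  rcases (Z \ {β}).eq_empty_or_nonempty with h | h
  · exact ⟨1, one_pos, fun t ht htβ => absurd (Set.mem_diff_singleton.mpr ⟨ht, htβ⟩)
      (by rw [h]; exact notMem_empty t)⟩
  · obtain ⟨a, ha, hmin⟩ := Set.exists_min_image _ (fun t => |t - β|)
      (hZ.subset Set.diff_subset) h
    refine ⟨|a - β|, ?_, fun t ht htβ => hmin t ⟨ht, htβ⟩⟩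
    have hne : a - β ≠ 0 := sub_ne_zero.mpr (by simpa using ha.2)
    exact abs_pos.mpr hne

/-- Constant sign on an interval with no zeros. -/
lemma sign_const {f : ℝ → ℝ} (hf : Continuous f) {a b : ℝ}
    (h0 : ∀ t ∈ Ioo a b, f t ≠ 0) :
    (∀ t ∈ Ioo a b, 0 < f t) ∨ (∀ t ∈ Ioo a b, f t < 0) := by
  by_contra hcon
  push_neg at hcon
  obtain ⟨⟨t1, ht1, ht1'⟩, ⟨t2, ht2, ht2'⟩⟩ := hcon
  have h1 : f t1 < 0 := lt_of_le_of_ne ht1' (h0 t1 ht1)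
  have h2 : 0 < f t2 := lt_of_le_of_ne ht2' (Ne.symm (h0 t2 ht2))
  rcases lt_trichotomy t1 t2 with h | rfl | h
  · obtain ⟨c, hc, hc0⟩ := intermediate_value_Ioo h.le (hf.continuousOn) (show (0:ℝ) ∈ Ioo (f t1) (f t2) from ⟨h1, h2⟩)
    exact h0 c ⟨ht1.1.trans hc.1, hc.2.trans ht2.2⟩ hc0
  · linarith
  · obtain ⟨c, hc, hc0⟩ := intermediate_value_Ioo' h.le (hf.continuousOn) (show (0:ℝ) ∈ Ioo (f t1) (f t2) from ⟨h1, h2⟩)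
    exact h0 c ⟨ht2.1.trans hc.1, hc.2.trans ht1.2⟩ hc0

/-! ### Crossing lemma -/

lemma e_ne {β c : ℝ} (h1 : 0 < c) (h2 : c < 2*π) : e (β + c) ≠ e β := by
  intro h
  rcases e_eq_iff.mp h with ⟨n, hn⟩
  have hc : c = n * (2*π) := by linarith
  have hπ : (0:ℝ) < 2*π := by positivity
  have hn0 : 0 < (n:ℝ) := by
    by_contra hle
    push_neg at hle
    nlinarith
  have hn1 : (n:ℝ) < 1 := by nlinarith
  have : (0:ℤ) < n ∧ (n:ℤ) < 1 := ⟨by exact_mod_cast hn0, by exact_mod_cast hn1⟩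
  omega

lemma mem_bTrace_angle {m : ℂ} {r : ℝ} (hr : 0 < r) {x : ℂ} (hx : x ∈ bTrace m r) :
    ∃ θ : ℝ, e θ = x ∧ dd m r θ = 0 := by
  refine ⟨Complex.arg x, e_surj hx.1, ?_⟩
  rw [← bTrace_e hr, e_surj hx.1]
  exact hx

/-- If all points of the trace are equal to a single point, but it has two points,
contradiction. -/
lemma pair_ne_singleton {p p' z : ℂ} (hpp' : p ≠ p')
    (hB : ∀ x ∈ ({p, p'} : Set ℂ), x = z) : False := by
  have h1 := hB p (by simp)
  have h2 := hB p' (by simp)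
  exact hpp' (h1.trans h2.symm)

lemma dd_hasDerivAt (m : ℂ) (r : ℝ) (β : ℝ) :
    HasDerivAt (dd m r) (2 * ‖m‖ * Real.sin (β - Complex.arg m)) β := by
  have hfun : dd m r = fun θ => (1 + Complex.normSq m - r^2)
      - 2 * ‖m‖ * Real.cos (θ - Complex.arg m) := funext (dd_eq m r)
  rw [hfun]
  have h1 : HasDerivAt (fun θ:ℝ => θ - Complex.arg m) 1 β := (hasDerivAt_id β).sub_const _
  have h2 : HasDerivAt (fun θ:ℝ => Real.cos (θ - Complex.arg m))
      (-Real.sin (β - Complex.arg m) * 1) β := (Real.hasDerivAt_cos _).comp β h1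
  have h3 := (h2.const_mul (2 * ‖m‖)).const_sub (1 + Complex.normSq m - r^2)
  exact h3.congr_deriv (by ring)

/-- If `dd` has a critical point at a boundary angle, the trace is a single point. -/
lemma crit_contra {m : ℂ} {r : ℝ} (hr : 0 < r) {p p' : ℂ} (hpp' : p ≠ p')
    (hB : bTrace m r = {p, p'}) (hm : m ≠ 0) {β : ℝ} (hβ0 : dd m r β = 0)
    (hsin : Real.sin (β - Complex.arg m) = 0) : False := by
  set s := ‖m‖ with hs
  set ψ := Complex.arg m with hψ
  have hspos : 0 < s := by simpa [hs] using norm_pos_iff.mpr hm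
  have hcosval : Real.cos (β - ψ) = 1 ∨ Real.cos (β - ψ) = -1 :=
    Real.sin_eq_zero_iff_cos_eq.mp hsin
  -- all trace points are the same point
  have hkey : ∀ x ∈ bTrace m r, x = (if Real.cos (β - ψ) = 1 then e ψ else e (ψ + π)) := by
    intro x hx
    obtain ⟨θ, hθx, hθ0⟩ := mem_bTrace_angle hr hx
    have hcosθ : Real.cos (θ - ψ) = Real.cos (β - ψ) := by
      have h1 := dd_eq m r θ
      have h2 := dd_eq m r β
      rw [hθ0] at h1
      rw [hβ0] at h2
      have h3 := h1.symm.trans h2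
      have h4 : Real.cos (θ - ψ) * (2*s) = Real.cos (β - ψ) * (2*s) := by
        linear_combination -h3
      exact mul_right_cancel₀ (by positivity) h4
    rcases hcosval with hc | hc
    · rw [if_pos hc]
      rw [hc] at hcosθ
      obtain ⟨n, hn⟩ := (Real.cos_eq_one_iff _).mp hcosθ
      have : θ = ψ + n * (2*π) := by linarith
      rw [← hθx, this, e_periodic]
    · rw [if_neg (by rw [hc]; norm_num)]
      rw [hc] at hcosθ
      obtain ⟨n, hn⟩ := Real.cos_eq_neg_one_iff.mp hcosθ
      have : θ = (ψ + π) + n * (2*π) := by linarith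
      rw [← hθx, this, e_periodic]
  rw [hB] at hkey
  exact pair_ne_singleton hpp' hkey

/-- Main crossing lemma: at a boundary angle of a two-point trace,
the signal is 1 and takes values 1/0 on the two sides. -/
lemma crossing {m : ℂ} {r : ℝ} (hr : 0 < r) (h2 : (bTrace m r).ncard = 2)
    {β : ℝ} (hβ : e β ∈ bTrace m r) :
    signal m r (e β) = 1 ∧
    ∃ δ > (0:ℝ),
      (∀ t, 0 < t → t < δ → signal m r (e (β + t)) = 1 ∧ signal m r (e (β - t)) = 0) ∨
      (∀ t, 0 < t → t < δ → signal m r (e (β + t)) = 0 ∧ signal m r (e (β - t)) = 1) := by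
  obtain ⟨p, p', hpp', hB⟩ := Set.ncard_eq_two.mp h2
  have hdd0 : dd m r β = 0 := (bTrace_e hr β).mp hβ
  have hsig : signal m r (e β) = 1 := by rw [signal_e hr, if_pos hdd0.le]
  refine ⟨hsig, ?_⟩
  have hπ : (0:ℝ) < π := Real.pi_pos
  -- m ≠ 0
  have hm : m ≠ 0 := by
    rintro rfl
    have hall : ∀ θ, e θ ∈ bTrace 0 r := by
      intro θ
      rw [bTrace_e hr]
      rw [dd_eq] at hdd0 ⊢
      simpa using hdd0
    have h1 := hall β
    have h2' := hall (β + π)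
    have h3 := hall (β + π/2)
    rw [hB] at h1 h2' h3
    have d1 : e (β + π) ≠ e β := e_ne hπ (by linarith)
    have d2 : e (β + π/2) ≠ e β := e_ne (by linarith) (by linarith)
    have d3 : e (β + π) ≠ e (β + π/2) := by
      have : β + π = (β + π/2) + π/2 := by ring
      rw [this]
      exact e_ne (by linarith) (by linarith)
    simp only [Set.mem_insert_iff, Set.mem_singleton_iff] at h1 h2' h3
    rcases h1 with h1 | h1 <;> rcases h2' with h2'' | h2'' <;> rcases h3 with h3 | h3 <;>
      simp_all
  -- zero isolation
  have hZfin : {θ ∈ Ioo (β - π) (β + π) | dd m r θ = 0}.Finite := by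
    apply Set.Finite.of_finite_image (f := e)
    · apply Set.Finite.subset ((Set.finite_singleton p').insert p)
      rintro x ⟨θ, hθ, rfl⟩
      have : e θ ∈ bTrace m r := (bTrace_e hr θ).mpr hθ.2
      rw [hB] at this
      exact this
    · intro θ hθ θ' hθ' hee
      refine e_injOn_Ico (β - π) θ ⟨hθ.1.1.le, ?_⟩ θ' ⟨hθ'.1.1.le, ?_⟩ hee
      · have := hθ.1.2; linarith
      · have := hθ'.1.2; linarith
  obtain ⟨δ₁, hδ₁, hgap⟩ := exists_gap hZfin β
  set δ₀ := min δ₁ π with hδ₀def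
  have hδ₀ : 0 < δ₀ := lt_min hδ₁ hπ
  have hno : ∀ x, x ≠ β → |x - β| < δ₀ → dd m r x ≠ 0 := by
    intro x hxβ hxδ h0
    have hmem : x ∈ Ioo (β - π) (β + π) := by
      rw [abs_sub_lt_iff] at hxδ
      have hδπ : δ₀ ≤ π := min_le_right _ _
      constructor <;> [linarith [hxδ.2]; linarith [hxδ.1]]
    have := hgap x ⟨hmem, h0⟩ hxβ
    have hδ1 : δ₀ ≤ δ₁ := min_le_left _ _
    linarith
  -- constant signs on the two sides
  have hR : (∀ t ∈ Ioo β (β + δ₀), 0 < dd m r t) ∨ (∀ t ∈ Ioo β (β + δ₀), dd m r t < 0) := by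
    apply sign_const (dd_cont m r)
    intro t ht
    apply hno t (ne_of_gt ht.1)
    rw [abs_of_pos (by linarith [ht.1])]
    linarith [ht.2]
  have hL : (∀ t ∈ Ioo (β - δ₀) β, 0 < dd m r t) ∨ (∀ t ∈ Ioo (β - δ₀) β, dd m r t < 0) := by
    apply sign_const (dd_cont m r)
    intro t ht
    apply hno t (ne_of_lt ht.2)
    rw [abs_of_neg (by linarith [ht.2])]
    linarith [ht.1]
  -- rule out same-sign cases
  have hsin : Real.sin (β - Complex.arg m) = 0 → False :=
    fun h => crit_contra hr hpp' hB hm hdd0 h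
  have habs : 0 < ‖m‖ := norm_pos_iff.mpr hm
  have hderiv := (dd_hasDerivAt m r β).deriv
  rcases hR with hRp | hRn <;> rcases hL with hLp | hLn
  · -- local min
    exfalso
    have hlm : IsLocalMin (dd m r) β := by
      have hev : ∀ᶠ x in nhds β, dd m r β ≤ dd m r x := by
        rw [Metric.eventually_nhds_iff]
        refine ⟨δ₀, hδ₀, fun x hx => ?_⟩
        rcases eq_or_ne x β with rfl | hne
        · exact le_refl _
        · rw [Real.dist_eq] at hx
          rw [hdd0]
          rcases hne.lt_or_gt with hlt | hlt
          · exact (hLp x ⟨by rw [abs_sub_lt_iff] at hx; linarith [hx.2], hlt⟩).le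
          · exact (hRp x ⟨hlt, by rw [abs_sub_lt_iff] at hx; linarith [hx.1]⟩).le
      exact hev
    have := hlm.deriv_eq_zero
    rw [hderiv] at this
    apply hsin
    have h2s : (2:ℝ) * ‖m‖ ≠ 0 := by positivity
    exact (mul_eq_zero.mp this).resolve_left h2s
  · -- R pos, L neg: branch 2
    refine ⟨δ₀, hδ₀, Or.inr fun t ht htδ => ?_⟩
    constructor
    · rw [signal_e hr, if_neg (not_le.mpr (hRp (β + t) ⟨by linarith, by linarith⟩))]
    · rw [signal_e hr, if_pos (hLn (β - t) ⟨by linarith, by linarith⟩).le]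
  · -- R neg, L pos: branch 1
    refine ⟨δ₀, hδ₀, Or.inl fun t ht htδ => ?_⟩
    constructor
    · rw [signal_e hr, if_pos (hRn (β + t) ⟨by linarith, by linarith⟩).le]
    · rw [signal_e hr, if_neg (not_le.mpr (hLp (β - t) ⟨by linarith, by linarith⟩))]
  · -- local max
    exfalso
    have hlm : IsLocalMax (dd m r) β := by
      have hev : ∀ᶠ x in nhds β, dd m r x ≤ dd m r β := by
        rw [Metric.eventually_nhds_iff]
        refine ⟨δ₀, hδ₀, fun x hx => ?_⟩
        rcases eq_or_ne x β with rfl | hne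
        · exact le_refl _
        · rw [Real.dist_eq] at hx
          rw [hdd0]
          rcases hne.lt_or_gt with hlt | hlt
          · exact (hLn x ⟨by rw [abs_sub_lt_iff] at hx; linarith [hx.2], hlt⟩).le
          · exact (hRn x ⟨hlt, by rw [abs_sub_lt_iff] at hx; linarith [hx.1]⟩).le
      exact hev
    have := hlm.deriv_eq_zero
    rw [hderiv] at this
    apply hsin
    have h2s : (2:ℝ) * ‖m‖ ≠ 0 := by positivity
    exact (mul_eq_zero.mp this).resolve_left h2s
/-! ### Counting connected components of a finite disjoint union of compact connected sets -/

lemma numCC_of_partition {A : Set ℂ} {c : ℕ} (C : Fin c → Set ℂ)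
    (hne : ∀ j, (C j).Nonempty) (hcompact : ∀ j, IsCompact (C j))
    (hconn : ∀ j, IsPreconnected (C j))
    (hdisj : ∀ j j', j ≠ j' → C j ∩ C j' = ∅)
    (hcover : A = ⋃ j, C j) :
    Nat.card (ConnectedComponents ↥A) = c := by
  classical
  set X := ↥A
  set D : Fin c → Set X := fun j => Subtype.val ⁻¹' (C j) with hD
  have hCsubA : ∀ j, C j ⊆ A := fun j => hcover ▸ Set.subset_iUnion C j
  have himg : ∀ j, Subtype.val '' (D j) = C j := by
    intro j
    rw [Set.image_preimage_eq_inter_range, Subtype.range_coe]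
    exact Set.inter_eq_self_of_subset_left (hCsubA j)
  have hclosed : ∀ j, IsClosed (D j) :=
    fun j => ((hcompact j).isClosed).preimage continuous_subtype_val
  have hopen : ∀ j, IsOpen (D j) := by
    intro j
    rw [← isClosed_compl_iff]
    have : (D j)ᶜ = Subtype.val ⁻¹' (⋃ j' ∈ ({j}ᶜ : Set (Fin c)), C j') := by
      ext x
      simp only [Set.mem_compl_iff, Set.mem_preimage, Set.mem_iUnion, hD]
      constructor
      · intro hx
        have hxA : (x:ℂ) ∈ ⋃ j, C j := by rw [← hcover]; exact x.2
        obtain ⟨j', hj'⟩ := Set.mem_iUnion.mp hxA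
        exact ⟨j', by rintro rfl; exact hx hj', hj'⟩
      · rintro ⟨j', hj'ne, hj'⟩ hx
        exact absurd (Set.mem_inter hj' hx)
          (by rw [hdisj j' j (by simpa using hj'ne)]; exact Set.notMem_empty _)
    rw [this]
    apply IsClosed.preimage continuous_subtype_val
    apply Set.Finite.isClosed_biUnion (Set.toFinite _)
    exact fun j' _ => (hcompact j').isClosed
  have hpre : ∀ j, IsPreconnected (D j) := by
    intro j
    rw [← Topology.IsInducing.subtypeVal.isPreconnected_image, himg j]
    exact hconn j
  -- choose points
  have hpt : ∀ j, ∃ x : X, (x : ℂ) ∈ C j :=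
    fun j => ⟨⟨(hne j).choose, hCsubA j (hne j).choose_spec⟩, (hne j).choose_spec⟩
  choose pt hptC using hpt
  have hptD : ∀ j, pt j ∈ D j := fun j => hptC j
  have hbij : Function.Bijective (fun j => (ConnectedComponents.mk (pt j))) := by
    constructor
    · intro j j' hjj'
      rw [ConnectedComponents.coe_eq_coe] at hjj'
      have h1 : pt j' ∈ connectedComponent (pt j) := hjj' ▸ mem_connectedComponent
      have h2 : connectedComponent (pt j) ⊆ D j :=
        (IsClopen.connectedComponent_subset ⟨hclosed j, hopen j⟩ (hptD j))
      by_contra hne'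
      have hmem : ((pt j' : X) : ℂ) ∈ C j ∩ C j' := ⟨h2 h1, hptC j'⟩
      rw [hdisj j j' hne'] at hmem
      exact Set.notMem_empty _ hmem
    · intro z
      obtain ⟨y, rfl⟩ := ConnectedComponents.surjective_coe z
      have hyA : (y:ℂ) ∈ ⋃ j, C j := by rw [← hcover]; exact y.2
      obtain ⟨j, hj⟩ := Set.mem_iUnion.mp hyA
      refine ⟨j, ?_⟩
      rw [ConnectedComponents.coe_eq_coe]
      exact connectedComponent_eq
        ((hpre j).subset_connectedComponent (hptD j) (show y ∈ D j from hj))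
  have := Nat.card_eq_of_bijective _ hbij
  simpa using this.symm

/-- Arcs: compact connected subsets of the circle. -/
lemma arc_compact (x y : ℝ) : IsCompact (e '' Icc x y) := (isCompact_Icc).image e_cont

lemma arc_preconnected (x y : ℝ) : IsPreconnected (e '' Icc x y) :=
  (isPreconnected_Icc).image e (e_cont.continuousOn)

/-- A function locally constant on an open interval is constant there. -/
lemma loc_const_Ioo {f : ℝ → ℕ} {a b : ℝ}
    (h : ∀ x ∈ Ioo a b, ∀ᶠ y in nhds x, f y = f x) :
    ∀ x ∈ Ioo a b, ∀ y ∈ Ioo a b, f x = f y := by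
  intro x hx
  set U : Set ℝ := {y ∈ Ioo a b | f y = f x} with hU
  set V : Set ℝ := {y ∈ Ioo a b | f y ≠ f x} with hV
  have hUopen : IsOpen U := by
    rw [isOpen_iff_mem_nhds]
    intro y hy
    filter_upwards [h y hy.1, isOpen_Ioo.eventually_mem hy.1] with z hz1 hz2
    exact ⟨hz2, hz1.trans hy.2⟩
  have hVopen : IsOpen V := by
    rw [isOpen_iff_mem_nhds]
    intro y hy
    filter_upwards [h y hy.1, isOpen_Ioo.eventually_mem hy.1] with z hz1 hz2
    exact ⟨hz2, hz1.symm ▸ hy.2⟩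
  intro y hy
  by_contra hne
  have hsub : Ioo a b ⊆ U ∪ V := by
    intro z hz
    by_cases hfz : f z = f x
    · exact Or.inl ⟨hz, hfz⟩
    · exact Or.inr ⟨hz, hfz⟩
  obtain ⟨w, hwI, hwU, hwV⟩ := isPreconnected_Ioo U V hUopen hVopen hsub
    ⟨x, hx, hx, rfl⟩ ⟨y, hy, hy, fun hc => hne hc.symm⟩
  exact hwV.2 hwU.2

/-! ### Window construction -/

lemma e_toIcoMod (a t : ℝ) : e (toIcoMod Real.two_pi_pos a t) = e t := by
  have h : toIcoMod Real.two_pi_pos a t = t + (-(toIcoDiv Real.two_pi_pos a t)) * (2*π) := by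
    rw [toIcoMod]
    push_cast
    rw [zsmul_eq_mul]
    push_cast
    ring
  rw [h]
  have hper := e_periodic t (-(toIcoDiv Real.two_pi_pos a t))
  push_cast at hper
  exact hper

lemma smono_of_succ {s : ℕ → ℝ} {q : ℕ} (h : ∀ j ≤ q, s j < s (j+1)) :
    ∀ {j1 j2 : ℕ}, j1 < j2 → j2 ≤ q + 1 → s j1 < s j2 := by
  intro j1 j2 hlt hle
  induction j2 with
  | zero => omega
  | succ k ih =>
    rcases Nat.lt_succ_iff_lt_or_eq.mp hlt with h' | h'
    · exact (ih h' (by omega)).trans (h k (by omega))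
    · subst h'
      exact h j1 (by omega)

lemma Hsum_loc_const {n : ℕ} (v : Fin n → ℂ × ℝ) (hr : ∀ i, 0 < (v i).2) {θ : ℝ}
    (hθ : e θ ∉ ⋃ i, bTrace (v i).1 (v i).2) :
    ∀ᶠ θ' in nhds θ, Hsum v (e θ') = Hsum v (e θ) := by
  have h : ∀ i, ∀ᶠ θ' in nhds θ,
      signal (v i).1 (v i).2 (e θ') = signal (v i).1 (v i).2 (e θ) :=
    fun i => signal_loc_const (hr i) (fun hmem => hθ (Set.mem_iUnion.mpr ⟨i, hmem⟩))
  filter_upwards [Filter.eventually_all.mpr h] with θ' hθ'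
  exact Finset.sum_congr rfl fun i _ => hθ' i

lemma window {n : ℕ} (v : Fin n → ℂ × ℝ) (hr : ∀ i, 0 < (v i).2)
    (hdisj : ∀ i j : Fin n, i ≠ j →
      bTrace (v i).1 (v i).2 ∩ bTrace (v j).1 (v j).2 = ∅)
    (hcard : ∀ i : Fin n,
      bTrace (v i).1 (v i).2 = ∅ ∨ (bTrace (v i).1 (v i).2).ncard = 2)
    (hBfin : (⋃ i, bTrace (v i).1 (v i).2).Finite)
    {a : ℝ} (ha : e a ∉ ⋃ i, bTrace (v i).1 (v i).2) :
    ∃ (q : ℕ) (s : ℕ → ℝ) (val : ℕ → ℕ),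
      s 0 = a ∧ s (q+1) = a + 2*π ∧
      (∀ j, j ≤ q → s j < s (j+1)) ∧
      (∀ j, j ≤ q → ∀ θ ∈ Ioo (s j) (s (j+1)), Hsum v (e θ) = val j) ∧
      (∀ j, 1 ≤ j → j ≤ q →
        Hsum v (e (s j)) = max (val (j-1)) (val j) ∧
        (val j = val (j-1) + 1 ∨ val (j-1) = val j + 1)) ∧
      (∀ θ ∈ Ioo a (a+2*π),
        (e θ ∈ ⋃ i, bTrace (v i).1 (v i).2 ↔ ∃ j, 1 ≤ j ∧ j ≤ q ∧ θ = s j)) ∧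
      val 0 = Hsum v (e a) ∧ val q = Hsum v (e a) ∧
      (⋃ i, bTrace (v i).1 (v i).2).ncard = q := by
  classical
  set B := ⋃ i, bTrace (v i).1 (v i).2 with hBdef
  have h2π : (0:ℝ) < 2*π := Real.two_pi_pos
  have hBnorm : ∀ b ∈ B, ‖b‖ = 1 := by
    intro b hb
    obtain ⟨i, hi⟩ := Set.mem_iUnion.mp hb
    exact hi.1
  set θf : ℂ → ℝ := fun b => toIcoMod Real.two_pi_pos a (Complex.arg b) with hθfdef
  have hθfe : ∀ b ∈ B, e (θf b) = b := fun b hb => by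
    rw [hθfdef]
    simp only
    rw [e_toIcoMod]
    exact e_surj (hBnorm b hb)
  set Θ : Finset ℝ := hBfin.toFinset.image θf with hΘdef
  have hΘmem : ∀ x ∈ Θ, e x ∈ B ∧ x ∈ Ico a (a+2*π) := by
    intro x hx
    rw [hΘdef, Finset.mem_image] at hx
    obtain ⟨b, hb, rfl⟩ := hx
    have hbB : b ∈ B := hBfin.mem_toFinset.mp hb
    exact ⟨(hθfe b hbB).symm ▸ hbB, toIcoMod_mem_Ico _ _ _⟩
  have hΘIoo : ∀ x ∈ Θ, x ∈ Ioo a (a+2*π) := by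
    intro x hx
    obtain ⟨hxB, hxI⟩ := hΘmem x hx
    rcases eq_or_lt_of_le hxI.1 with rfl | h
    · exact absurd hxB ha
    · exact ⟨h, hxI.2⟩
  have hΘrep : ∀ θ ∈ Ico a (a+2*π), e θ ∈ B → θ ∈ Θ := by
    intro θ hθI hθB
    have heq : θf (e θ) = θ := by
      apply e_injOn_Ico a _ (toIcoMod_mem_Ico _ _ _) _ hθI
      exact hθfe (e θ) hθB
    rw [← heq]
    exact Finset.mem_image_of_mem θf (hBfin.mem_toFinset.mpr hθB)
  set q := Θ.card with hq
  set iso := Θ.orderIsoOfFin hq.symm with hiso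
  set s : ℕ → ℝ := fun j =>
    if hj0 : j = 0 then a else if h : j ≤ q then (iso ⟨j-1, by omega⟩ : ℝ) else a + 2*π
    with hsdef
  have hs0 : s 0 = a := by simp [hsdef]
  have hsq1 : s (q+1) = a + 2*π := by
    rw [hsdef]
    simp only
    rw [dif_neg (by omega : ¬ q + 1 = 0), dif_neg (by omega : ¬ q + 1 ≤ q)]
  have hsmid : ∀ j (h1 : 1 ≤ j) (h2 : j ≤ q), s j = iso ⟨j-1, by omega⟩ := by
    intro j hj1 hj2
    rw [hsdef]
    simp only
    rw [dif_neg (by omega : ¬ j = 0), dif_pos hj2]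
  have hsΘ : ∀ j, 1 ≤ j → j ≤ q → s j ∈ Ioo a (a+2*π) ∧ e (s j) ∈ B := by
    intro j hj1 hj2
    rw [hsmid j hj1 hj2]
    have hmem := (iso ⟨j-1, by omega⟩).2
    exact ⟨hΘIoo _ hmem, (hΘmem _ hmem).1⟩
  have h1 : ∀ j, j ≤ q → s j < s (j+1) := by
    intro j hj
    rcases Nat.eq_zero_or_pos j with rfl | hj0
    · rw [hs0]
      rcases Nat.eq_zero_or_pos q with hq0 | hq1
      · rw [show (0:ℕ)+1 = q+1 by omega, hsq1]; linarith
      · exact (hsΘ 1 le_rfl hq1).1.1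
    · rcases Nat.lt_or_ge (j+1) (q+1) with hlt | hge
      · rw [hsmid j hj0 hj, hsmid (j+1) (by omega) (by omega)]
        have : (⟨j-1, by omega⟩ : Fin q) < ⟨j+1-1, by omega⟩ := by
          simp only [Fin.mk_lt_mk]
          omega
        exact_mod_cast (iso.strictMono this)
      · have hjq : j = q := by omega
        rw [hjq, hsq1]
        exact (hsΘ q (by omega) le_rfl).1.2
  have hsm : ∀ {j1 j2 : ℕ}, j1 < j2 → j2 ≤ q + 1 → s j1 < s j2 := smono_of_succ h1
  -- boundary characterization
  have hbd : ∀ θ ∈ Ioo a (a+2*π), (e θ ∈ B ↔ ∃ j, 1 ≤ j ∧ j ≤ q ∧ θ = s j) := by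
    intro θ hθ
    constructor
    · intro hθB
      have hθΘ : θ ∈ Θ := hΘrep θ ⟨hθ.1.le, hθ.2⟩ hθB
      set l := iso.symm ⟨θ, hθΘ⟩ with hl
      have : iso l = ⟨θ, hθΘ⟩ := iso.apply_symm_apply _
      refine ⟨(l:ℕ)+1, by omega, by omega, ?_⟩
      rw [hsmid ((l:ℕ)+1) (by omega) (by omega)]
      have : (⟨(l:ℕ)+1-1, by omega⟩ : Fin q) = l := by
        apply Fin.ext
        simp
      rw [this]
      rw [hl]
      rw [iso.apply_symm_apply]
    · rintro ⟨j, hj1, hjq, rfl⟩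
      exact (hsΘ j hj1 hjq).2
  -- interior points are off the boundary set
  have hint : ∀ j, j ≤ q → ∀ θ ∈ Ioo (s j) (s (j+1)), e θ ∉ B := by
    intro j hj θ hθ hθB
    have hθIoo : θ ∈ Ioo a (a+2*π) := by
      constructor
      · rcases Nat.eq_zero_or_pos j with rfl | hj0
        · rw [← hs0]; exact hθ.1
        · exact lt_trans (by rw [← hs0]; exact hsm hj0 (by omega)) hθ.1
      · rcases Nat.lt_or_ge (j+1) (q+1) with hlt | hge
        · exact lt_trans hθ.2 (by rw [← hsq1]; exact hsm hlt le_rfl)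
        · have : j = q := by omega
          subst this
          rw [← hsq1]; exact hθ.2
    obtain ⟨l, hl1, hlq, rfl⟩ := (hbd θ hθIoo).mp hθB
    rcases Nat.lt_or_ge l (j+1) with h | h
    · exact absurd hθ.1 (not_lt.mpr (by
        rcases Nat.lt_or_ge l j with h' | h'
        · exact (hsm h' (by omega)).le
        · have : l = j := by omega
          rw [this]))
    · exact absurd hθ.2 (not_lt.mpr (by
        rcases Nat.lt_or_ge (j+1) l with h' | h'
        · exact (hsm h' (by omega)).le
        · have : l = j+1 := by omega
          rw [this]))
  -- values
  set val : ℕ → ℕ := fun j => Hsum v (e ((s j + s (j+1))/2)) with hvaldef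
  have h2 : ∀ j, j ≤ q → ∀ θ ∈ Ioo (s j) (s (j+1)), Hsum v (e θ) = val j := by
    intro j hj θ hθ
    have hmid : (s j + s (j+1))/2 ∈ Ioo (s j) (s (j+1)) := by
      have := h1 j hj
      constructor <;> [linarith; linarith]
    exact loc_const_Ioo (f := fun θ => Hsum v (e θ))
      (fun x hx => Hsum_loc_const v hr (hint j hj x hx)) θ hθ _ hmid
  -- jump structure at boundary angles
  have h3 : ∀ j, 1 ≤ j → j ≤ q →
      Hsum v (e (s j)) = max (val (j-1)) (val j) ∧
      (val j = val (j-1) + 1 ∨ val (j-1) = val j + 1) := by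
    intro j hj1 hjq
    set β := s j with hβdef
    have hβIoo : β ∈ Ioo a (a + 2*π) := (hsΘ j hj1 hjq).1
    have hβB : e β ∈ B := (hsΘ j hj1 hjq).2
    obtain ⟨i, hi⟩ := Set.mem_iUnion.mp hβB
    have hi2 : (bTrace (v i).1 (v i).2).ncard = 2 :=
      (hcard i).resolve_left (fun h0 => absurd (h0 ▸ hi) (Set.notMem_empty _))
    obtain ⟨hsig1, δc, hδc, hcross⟩ := crossing (hr i) hi2 hi
    have hoth : ∀ᶠ θ' in nhds β, ∀ i', i' ≠ i →
        signal (v i').1 (v i').2 (e θ') = signal (v i').1 (v i').2 (e β) := by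
      rw [Filter.eventually_all]
      intro i'
      by_cases hii : i' = i
      · filter_upwards with θ' h
        exact absurd hii h
      · have hnotin : e β ∉ bTrace (v i').1 (v i').2 := by
          intro hmem
          have hd := hdisj i' i hii
          exact absurd (Set.mem_inter hmem hi) (hd ▸ Set.notMem_empty _)
        filter_upwards [signal_loc_const (hr i') hnotin] with θ' h using fun _ => h
    rw [Metric.eventually_nhds_iff] at hoth
    obtain ⟨δ', hδ'pos, hoth⟩ := hoth
    have hgapL : s (j-1) < s j := hsm (by omega) (by omega)
    have hgapR : s j < s (j+1) := h1 j hjq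
    set t := min (min (δc/2) (δ'/2)) (min ((s j - s (j-1))/2) ((s (j+1) - s j)/2)) with htdef
    have ht0 : 0 < t := by
      apply lt_min (lt_min (by linarith) (by linarith)) (lt_min (by linarith) (by linarith))
    have htδc : t < δc := lt_of_le_of_lt ((min_le_left _ _).trans (min_le_left _ _)) (by linarith)
    have htδ' : t < δ' := lt_of_le_of_lt ((min_le_left _ _).trans (min_le_right _ _)) (by linarith)
    have htLgap : t ≤ (s j - s (j-1))/2 := (min_le_right _ _).trans (min_le_left _ _)
    have htRgap : t ≤ (s (j+1) - s j)/2 := (min_le_right _ _).trans (min_le_right _ _)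
    have htL : β - t ∈ Ioo (s (j-1)) (s ((j-1)+1)) := by
      rw [show (j-1)+1 = j from by omega]
      constructor <;> [skip; skip] <;> simp only [hβdef] <;> linarith
    have htR : β + t ∈ Ioo (s j) (s (j+1)) := by
      constructor <;> simp only [hβdef] <;> linarith
    have hdecomp : ∀ θ' : ℝ, Hsum v (e θ') =
        signal (v i).1 (v i).2 (e θ') + ∑ i' ∈ Finset.univ.erase i, signal (v i').1 (v i').2 (e θ') := by
      intro θ'
      rw [Hsum, ← Finset.add_sum_erase _ _ (Finset.mem_univ i)]
    set w := ∑ i' ∈ Finset.univ.erase i, signal (v i').1 (v i').2 (e β) with hwdef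
    have hothsum : ∀ θ', dist θ' β < δ' →
        ∑ i' ∈ Finset.univ.erase i, signal (v i').1 (v i').2 (e θ') = w := by
      intro θ' hd
      apply Finset.sum_congr rfl
      intro i' hi'
      exact hoth hd i' (Finset.ne_of_mem_erase hi')
    have hdR : dist (β + t) β < δ' := by
      rw [Real.dist_eq, add_sub_cancel_left, abs_of_pos ht0]
      exact htδ'
    have hdL : dist (β - t) β < δ' := by
      rw [Real.dist_eq, sub_sub_cancel_left, abs_neg, abs_of_pos ht0]
      exact htδ'
    have hLval : val (j-1) = signal (v i).1 (v i).2 (e (β - t)) + w := by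
      rw [← h2 (j-1) (by omega) _ htL, hdecomp (β - t), hothsum _ hdL]
    have hRval : val j = signal (v i).1 (v i).2 (e (β + t)) + w := by
      rw [← h2 j hjq _ htR, hdecomp (β + t), hothsum _ hdR]
    have hβval : Hsum v (e β) = 1 + w := by
      rw [hdecomp β, hsig1, hwdef]
    rcases hcross with hc | hc
    · obtain ⟨hcp, hcm⟩ := hc t ht0 htδc
      rw [hcp] at hRval
      rw [hcm] at hLval
      constructor
      · rw [hβval, hLval, hRval]
        simp [Nat.max_eq_right]
      · left
        omega
    · obtain ⟨hcp, hcm⟩ := hc t ht0 htδc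
      rw [hcp] at hRval
      rw [hcm] at hLval
      constructor
      · rw [hβval, hLval, hRval]
        simp [Nat.max_eq_left]
      · right
        omega
  -- endpoint values
  have hga : ∀ᶠ θ' in nhds a, Hsum v (e θ') = Hsum v (e a) := Hsum_loc_const v hr ha
  rw [Metric.eventually_nhds_iff] at hga
  obtain ⟨ε, hε, hga⟩ := hga
  have hval0 : val 0 = Hsum v (e a) := by
    have hlt : s 0 < s 1 := h1 0 (by omega)
    rw [hs0] at hlt
    set θ' := min (a + ε/2) ((a + s 1)/2) with hθ'def
    have hθ'I : θ' ∈ Ioo (s 0) (s 1) := by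
      rw [hs0]
      constructor
      · apply lt_min <;> linarith
      · exact lt_of_le_of_lt (min_le_right _ _) (by linarith)
    have hθ'd : dist θ' a < ε := by
      rw [Real.dist_eq, abs_of_pos (by simp only [hθ'def]; have := lt_min (show a < a + ε/2 by linarith) (show a < (a + s 1)/2 by linarith); linarith [this])]
      calc θ' - a ≤ (a + ε/2) - a := by simp only [hθ'def]; linarith [min_le_left (a + ε/2) ((a + s 1)/2)]
      _ < ε := by linarith
    rw [← h2 0 (by omega) θ' hθ'I]
    exact hga hθ'd
  have hvalq : val q = Hsum v (e a) := by
    have hlt : s q < s (q+1) := h1 q le_rfl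
    have haB : e (a + 2*π) ∉ B := by
      have : e (a + 2*π) = e a := by
        have := e_periodic a 1
        push_cast at this
        rw [← this]
        ring_nf
      rw [this]
      exact ha
    have hga2 : ∀ᶠ θ' in nhds (a + 2*π), Hsum v (e θ') = Hsum v (e (a + 2*π)) :=
      Hsum_loc_const v hr haB
    rw [Metric.eventually_nhds_iff] at hga2
    obtain ⟨ε2, hε2, hga2⟩ := hga2
    rw [hsq1] at hlt
    set θ' := max (a + 2*π - ε2/2) ((s q + (a + 2*π))/2) with hθ'def
    have hθ'I : θ' ∈ Ioo (s q) (s (q+1)) := by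
      rw [hsq1]
      constructor
      · exact lt_of_lt_of_le (by linarith) (le_max_right _ _)
      · apply max_lt <;> linarith
    have hθ'd : dist θ' (a + 2*π) < ε2 := by
      rw [Real.dist_eq, abs_of_neg]
      · have h1' : a + 2*π - ε2/2 ≤ θ' := le_max_left _ _
        linarith
      · have : θ' < a + 2*π := by apply max_lt <;> linarith
        linarith
    have heq : Hsum v (e (a+2*π)) = Hsum v (e a) := by
      congr 1
      have := e_periodic a 1
      push_cast at this
      rw [← this]
      ring_nf
    rw [← h2 q le_rfl θ' hθ'I, hga2 hθ'd, heq]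
  -- cardinality
  have hcardB : B.ncard = q := by
    rw [hq, hΘdef]
    rw [Finset.card_image_of_injOn]
    · exact Set.ncard_eq_toFinset_card _ hBfin
    · intro b hb b' hb' hbb'
      have hbB : b ∈ B := hBfin.mem_toFinset.mp hb
      have hb'B : b' ∈ B := hBfin.mem_toFinset.mp hb'
      rw [← hθfe b hbB, ← hθfe b' hb'B, hbb']
  exact ⟨q, s, val, hs0, hsq1, h1, h2, h3, hbd, hval0, hvalq, hcardB⟩

/-! ### Locating a point in the窗口 partition, and merging runs -/

lemma locate {s : ℕ → ℝ} {q : ℕ} (h1 : ∀ j, j ≤ q → s j < s (j+1)) {θ : ℝ}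
    (hθ : θ ∈ Ioc (s 0) (s (q+1))) : ∃ j, j ≤ q ∧ θ ∈ Ioc (s j) (s (j+1)) := by
  classical
  set J := (Finset.range (q+1)).filter (fun l => s l < θ) with hJ
  have h0J : 0 ∈ J := by
    rw [hJ, Finset.mem_filter]
    exact ⟨Finset.mem_range.mpr (by omega), hθ.1⟩
  set j := J.max' ⟨0, h0J⟩ with hjdef
  have hjJ : j ∈ J := J.max'_mem _
  rw [hJ, Finset.mem_filter, Finset.mem_range] at hjJ
  refine ⟨j, by omega, hjJ.2, ?_⟩
  by_contra hcon
  push_neg at hcon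
  rcases Nat.lt_or_ge (j+1) (q+1) with hlt | hge
  · have : j + 1 ∈ J := by
      rw [hJ, Finset.mem_filter, Finset.mem_range]
      exact ⟨by omega, hcon⟩
    have := Finset.le_max' J (j+1) this
    omega
  · have hjq : j = q := by omega
    rw [hjq] at hcon
    exact absurd hθ.2 (not_le.mpr hcon)

lemma union_consecutive {s : ℕ → ℝ} {q : ℕ}
    (hsm : ∀ {j1 j2 : ℕ}, j1 < j2 → j2 ≤ q + 1 → s j1 < s j2) :
    ∀ (d j₀ : ℕ), j₀ + d + 1 ≤ q + 1 →
      (⋃ l ∈ Finset.Icc j₀ (j₀ + d), Icc (s l) (s (l+1))) = Icc (s j₀) (s (j₀ + d + 1)) := by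
  intro d
  induction d with
  | zero =>
    intro j₀ hle
    simp
  | succ d ih =>
    intro j₀ hle
    have hIcc : Finset.Icc j₀ (j₀ + (d+1)) = insert (j₀ + (d+1)) (Finset.Icc j₀ (j₀ + d)) := by
      ext x
      simp only [Finset.mem_Icc, Finset.mem_insert]
      omega
    rw [hIcc, Finset.set_biUnion_insert, ih j₀ (by omega)]
    rw [Set.union_comm]
    rw [show j₀ + d + 1 = j₀ + (d+1) from by omega]
    apply Set.Icc_union_Icc_eq_Icc
    · exact (hsm (by omega : j₀ < j₀ + (d+1)) (by omega)).le
    · exact (hsm (by omega : j₀ + (d+1) < j₀ + (d+1) + 1) (by omega)).le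

lemma merge_runs {s : ℕ → ℝ} {q : ℕ}
    (hsm : ∀ {j1 j2 : ℕ}, j1 < j2 → j2 ≤ q + 1 → s j1 < s j2) :
    ∀ (S : Finset ℕ), (∀ j ∈ S, 1 ≤ j ∧ j + 1 ≤ q) →
    ∃ T : Finset (ℕ × ℕ),
      (∀ p ∈ T, 1 ≤ p.1 ∧ p.1 ≤ p.2 ∧ p.2 + 1 ≤ q ∧ ∀ l, p.1 ≤ l → l ≤ p.2 → l ∈ S) ∧
      T.card = (S.filter (fun j => ¬ (j-1) ∈ S)).card ∧
      (⋃ j ∈ S, Icc (s j) (s (j+1))) = ⋃ p ∈ T, Icc (s p.1) (s (p.2+1)) ∧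
      (∀ p ∈ T, ∀ p' ∈ T, p ≠ p' →
        Icc (s p.1) (s (p.2+1)) ∩ Icc (s p'.1) (s (p'.2+1)) = ∅) := by
  classical
  intro S
  induction S using Finset.strongInductionOn with
  | _ S IH =>
  intro hS
  rcases S.eq_empty_or_nonempty with rfl | hne
  · exact ⟨∅, by simp, by simp, by simp, by simp⟩
  set j₀ := S.min' hne with hj₀def
  have hj₀S : j₀ ∈ S := S.min'_mem hne
  have hex : ∃ d, j₀ + d + 1 ∉ S := by
    refine ⟨S.max' hne, fun hmem => ?_⟩
    have := S.le_max' _ hmem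
    have := S.min'_le _ hmem
    omega
  set d₀ := Nat.find hex with hd₀def
  set l₀ := j₀ + d₀ with hl₀def
  have hl₀1 : l₀ + 1 ∉ S := Nat.find_spec hex
  have hrun : ∀ l, j₀ ≤ l → l ≤ l₀ → l ∈ S := by
    intro l hl1 hl2
    rcases Nat.eq_or_lt_of_le hl1 with rfl | hlt
    · exact hj₀S
    · have h1 : l - j₀ - 1 < d₀ := by omega
      have := Nat.find_min hex h1
      rw [not_not] at this
      have : j₀ + (l - j₀ - 1) + 1 = l := by omega
      rwa [← this]
  set S' := S \ (Finset.Icc j₀ l₀) with hS'def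
  have hS'sub : S' ⊆ S := Finset.sdiff_subset
  have hS'lb : ∀ l ∈ S', l₀ + 2 ≤ l := by
    intro l hl
    rw [hS'def, Finset.mem_sdiff, Finset.mem_Icc] at hl
    have hmin := S.min'_le _ hl.1
    rcases Nat.lt_or_ge l (l₀ + 1) with h | h
    · exact absurd ⟨hmin, by omega⟩ hl.2
    · rcases Nat.eq_or_lt_of_le h with h' | h'
      · exact absurd (h' ▸ hl.1) hl₀1
      · omega
  have hssub : S' ⊂ S := by
    rw [Finset.ssubset_iff_of_subset hS'sub]
    refine ⟨j₀, hj₀S, ?_⟩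
    intro hcon
    have := hS'lb j₀ hcon
    omega
  obtain ⟨T', hT'prop, hT'card, hT'union, hT'disj⟩ := IH S' hssub (fun j hj => hS j (hS'sub hj))
  have hl₀q : l₀ + 1 ≤ q := (hS l₀ (hrun l₀ (by omega) le_rfl)).2
  have hj₀1 : 1 ≤ j₀ := (hS j₀ hj₀S).1
  have hnotmem : (j₀, l₀) ∉ T' := by
    intro hmem
    have := (hT'prop _ hmem).2.2.2 j₀ le_rfl (by omega)
    have := hS'lb j₀ this
    omega
  refine ⟨insert (j₀, l₀) T', ?_, ?_, ?_, ?_⟩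
  · intro p hp
    rcases Finset.mem_insert.mp hp with rfl | hp'
    · exact ⟨hj₀1, by omega, hl₀q, fun l h1 h2 => hrun l h1 h2⟩
    · obtain ⟨a1, a2, a3, a4⟩ := hT'prop p hp'
      exact ⟨a1, a2, a3, fun l h1 h2 => hS'sub (a4 l h1 h2)⟩
  · rw [Finset.card_insert_of_notMem hnotmem, hT'card]
    have hset : S.filter (fun j => ¬ (j-1) ∈ S) =
        insert j₀ (S'.filter (fun j => ¬ (j-1) ∈ S')) := by
      ext j
      rw [Finset.mem_filter, Finset.mem_insert, Finset.mem_filter]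
      constructor
      · rintro ⟨hjS, hjst⟩
        rcases Nat.lt_or_ge l₀ j with h | h
        · right
          have hj' : j ∈ S' := by
            rw [hS'def, Finset.mem_sdiff, Finset.mem_Icc]
            exact ⟨hjS, fun hc => by omega⟩
          refine ⟨hj', fun hc => hjst (hS'sub hc)⟩
        · left
          have hminle := S.min'_le _ hjS
          rcases Nat.eq_or_lt_of_le hminle with h' | h'
          · exact h'.symm
          · exfalso
            apply hjst
            exact hrun (j-1) (by omega) (by omega)
      · rintro (rfl | ⟨hj', hjst⟩)
        · refine ⟨hj₀S, fun hc => ?_⟩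
          have := S.min'_le _ hc
          omega
        · have hjS : j ∈ S := hS'sub hj'
          have hjlb := hS'lb j hj'
          refine ⟨hjS, fun hc => ?_⟩
          rcases Nat.eq_or_lt_of_le (show l₀ + 1 ≤ j - 1 from by omega) with h' | h'
          · exact hl₀1 (h' ▸ hc)
          · apply hjst
            rw [hS'def, Finset.mem_sdiff, Finset.mem_Icc]
            exact ⟨hc, fun hcc => by omega⟩
    rw [hset, Finset.card_insert_of_notMem]
    intro hcon
    have := hS'lb j₀ (Finset.mem_filter.mp hcon).1
    omega
  · have hSsplit : S = (Finset.Icc j₀ l₀) ∪ S' := by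
      ext j
      rw [Finset.mem_union, Finset.mem_Icc, hS'def, Finset.mem_sdiff, Finset.mem_Icc]
      constructor
      · intro hj
        rcases Nat.lt_or_ge l₀ j with h | h
        · exact Or.inr ⟨hj, fun hc => by omega⟩
        · exact Or.inl ⟨S.min'_le _ hj, h⟩
      · rintro (⟨h1, h2⟩ | ⟨h1, _⟩)
        · exact hrun j h1 h2
        · exact h1
    rw [hSsplit, Finset.set_biUnion_union, Finset.set_biUnion_insert, ← hT'union]
    congr 1
    have := union_consecutive hsm d₀ j₀ (by omega)
    rw [← hl₀def] at this
    rw [this]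
  · intro p hp p' hp' hpp'
    rcases Finset.mem_insert.mp hp with rfl | hp2
    · rcases Finset.mem_insert.mp hp' with h' | hp2'
      · exact absurd h'.symm hpp'
      · have hq' := (hT'prop p' hp2').2.2.1
        have hq'' := (hT'prop p' hp2').2.1
        have hlb := hS'lb p'.1 ((hT'prop p' hp2').2.2.2 p'.1 le_rfl (hT'prop p' hp2').2.1)
        apply Set.eq_empty_iff_forall_notMem.mpr
        intro x hx
        have h1 : x ≤ s (l₀ + 1) := hx.1.2
        have h2 : s p'.1 ≤ x := hx.2.1
        have : s (l₀ + 1) < s p'.1 := hsm (by omega) (by omega)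
        linarith
    · rcases Finset.mem_insert.mp hp' with h' | hp2'
      · subst h'
        have hq' := (hT'prop p hp2).2.2.1
        have hq'' := (hT'prop p hp2).2.1
        have hlb := hS'lb p.1 ((hT'prop p hp2).2.2.2 p.1 le_rfl (hT'prop p hp2).2.1)
        apply Set.eq_empty_iff_forall_notMem.mpr
        intro x hx
        have h1 : x ≤ s (l₀ + 1) := hx.2.2
        have h2 : s p.1 ≤ x := hx.1.1
        have : s (l₀ + 1) < s p.1 := hsm (by omega) (by omega)
        linarith
      · exact hT'disj p hp2 p' hp2' hpp'
/-! ### Image characterization -/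

lemma interior_off {B : Set ℂ} {q : ℕ} {s : ℕ → ℝ}
    (h1 : ∀ j, j ≤ q → s j < s (j+1))
    (hsq1 : s (q+1) = s 0 + 2*π)
    (hbd : ∀ θ ∈ Ioo (s 0) (s 0 + 2*π), (e θ ∈ B ↔ ∃ j, 1 ≤ j ∧ j ≤ q ∧ θ = s j)) :
    ∀ j, j ≤ q → ∀ θ ∈ Ioo (s j) (s (j+1)), e θ ∉ B := by
  have hsm : ∀ {j1 j2 : ℕ}, j1 < j2 → j2 ≤ q + 1 → s j1 < s j2 := smono_of_succ h1
  intro j hj θ hθ hθB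
  have hθIoo : θ ∈ Ioo (s 0) (s 0 + 2*π) := by
    constructor
    · rcases Nat.eq_zero_or_pos j with rfl | hj0
      · exact hθ.1
      · exact lt_trans (hsm hj0 (by omega)) hθ.1
    · rcases Nat.lt_or_ge (j+1) (q+1) with hlt | hge
      · exact lt_trans hθ.2 (by rw [← hsq1]; exact hsm hlt le_rfl)
      · have : j = q := by omega
        subst this
        rw [← hsq1]; exact hθ.2
  obtain ⟨l, hl1, hlq, rfl⟩ := (hbd θ hθIoo).mp hθB
  rcases Nat.lt_or_ge l (j+1) with h | h
  · refine absurd hθ.1 (not_lt.mpr ?_)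
    rcases Nat.lt_or_ge l j with h' | h'
    · exact (hsm h' (by omega)).le
    · have : l = j := by omega
      rw [this]
  · refine absurd hθ.2 (not_lt.mpr ?_)
    rcases Nat.eq_or_lt_of_le h with h' | h'
    · rw [← h']
    · exact (hsm h' (by omega)).le

lemma image_char {n : ℕ} (v : Fin n → ℂ × ℝ) {q : ℕ} {s : ℕ → ℝ} {val : ℕ → ℕ}
    (hsq1 : s (q+1) = s 0 + 2*π)
    (h1 : ∀ j, j ≤ q → s j < s (j+1))
    (h2 : ∀ j, j ≤ q → ∀ θ ∈ Ioo (s j) (s (j+1)), Hsum v (e θ) = val j)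
    (h3 : ∀ j, 1 ≤ j → j ≤ q → Hsum v (e (s j)) = max (val (j-1)) (val j))
    (hv0 : val 0 = Hsum v (e (s 0))) :
    ∀ x ∈ S1, ∃ j, j ≤ q ∧ Hsum v x = val j := by
  intro x hx
  have hx1 : ‖x‖ = 1 := hx
  obtain ⟨θ, hθI, rfl⟩ := e_exists_rep hx1 (s 0)
  rcases eq_or_lt_of_le hθI.1 with heq | hlt
  · exact ⟨0, by omega, by rw [← heq]; exact hv0.symm⟩
  · obtain ⟨j, hjq, hθIoc⟩ := locate h1 ⟨hlt, by rw [hsq1]; exact hθI.2.le⟩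
    rcases eq_or_lt_of_le hθIoc.2 with heq | hlt2
    · have hj1q : j + 1 ≤ q := by
        by_contra hc
        have hjq' : j = q := by omega
        rw [heq, hjq', hsq1] at hθI
        exact absurd hθI.2 (by simp)
      have hmax := h3 (j+1) (by omega) hj1q
      rw [show j + 1 - 1 = j from by omega] at hmax
      rw [heq, hmax]
      rcases max_cases (val j) (val (j+1)) with ⟨hm, _⟩ | ⟨hm, _⟩
      · exact ⟨j, hjq, hm⟩
      · exact ⟨j+1, hj1q, hm⟩
    · exact ⟨j, hjq, h2 j hjq θ ⟨hθIoc.1, hlt2⟩⟩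

lemma telescope_Icc (f : ℕ → ℤ) (q : ℕ) :
    ∑ j ∈ Finset.Icc 1 q, (f j - f (j-1)) = f q - f 0 := by
  induction q with
  | zero => simp
  | succ k ih =>
    rw [Finset.sum_Icc_succ_top (by omega), ih]
    have h : k + 1 - 1 = k := by omega
    rw [h]
    ring

end Stmt8

open Stmt8 Real Complex Set in
/-- under the geometric robustness condition, the set of boundary
points `∂H_v` is finite with exactly `2 (H_v* − H_{v*} + τ(H_v))` elements. -/
theorem stmt8 {n : ℕ} (v : Fin n → ℂ × ℝ) (hr : ∀ i, 0 < (v i).2)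
    (hdisj : ∀ i j : Fin n, i ≠ j →
      bTrace (v i).1 (v i).2 ∩ bTrace (v j).1 (v j).2 = ∅)
    (hcard : ∀ i : Fin n,
      bTrace (v i).1 (v i).2 = ∅ ∨ (bTrace (v i).1 (v i).2).ncard = 2) :
    (⋃ i : Fin n, bTrace (v i).1 (v i).2).Finite ∧
    (⋃ i : Fin n, bTrace (v i).1 (v i).2).ncard
      = 2 * (maxOnS1 (Hsum v) - minOnS1 (Hsum v) + tau (Hsum v)) := by
  classical
  have htrfin : ∀ i, (bTrace (v i).1 (v i).2).Finite := by
    intro i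
    rcases hcard i with h | h
    · rw [h]; exact Set.finite_empty
    · obtain ⟨p, p', _, hpp⟩ := Set.ncard_eq_two.mp h
      rw [hpp]; exact (Set.finite_singleton p').insert p
  have hBfin : (⋃ i, bTrace (v i).1 (v i).2).Finite := Set.finite_iUnion htrfin
  refine ⟨hBfin, ?_⟩
  have hπ : (0:ℝ) < π := Real.pi_pos
  -- a base point off the boundary set
  have hexa : ∃ a : ℝ, e a ∉ ⋃ i, bTrace (v i).1 (v i).2 := by
    by_contra hcon
    push_neg at hcon
    have hinj : Set.InjOn e (Ico 0 (2*π)) := fun θ hθ θ' hθ' hee =>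
      e_injOn_Ico 0 θ (by simpa using hθ) θ' (by simpa using hθ') hee
    have hinf : (e '' (Ico 0 (2*π))).Infinite :=
      (Set.Ico_infinite (by linarith)).image hinj
    exact hinf (hBfin.subset (by rintro x ⟨θ, _, rfl⟩; exact hcon θ))
  obtain ⟨a₁, ha₁⟩ := hexa
  obtain ⟨q₁, s₁, val₁, hs₁0, hs₁q1, h₁1, h₁2, h₁3, h₁bd, h₁v0, h₁vq, h₁card⟩ :=
    window v hr hdisj hcard hBfin ha₁
  -- basic facts about the image of Hsum on S1
  have hS1mem : ∀ θ : ℝ, e θ ∈ S1 := fun θ => e_norm θ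
  have himg_ne : (Hsum v '' S1).Nonempty := ⟨_, ⟨e 0, hS1mem 0, rfl⟩⟩
  have hbdd : BddAbove (Hsum v '' S1) := by
    refine ⟨n, ?_⟩
    rintro _ ⟨x, _, rfl⟩
    calc Hsum v x ≤ ∑ _i : Fin n, 1 := by
          apply Finset.sum_le_sum
          intro i _
          unfold signal
          split <;> omega
    _ = n := by simp
  have hminmem : minOnS1 (Hsum v) ∈ Hsum v '' S1 := Nat.sInf_mem himg_ne
  have hmaxmem : maxOnS1 (Hsum v) ∈ Hsum v '' S1 := Nat.sSup_mem himg_ne hbdd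
  have hminle : ∀ x ∈ S1, minOnS1 (Hsum v) ≤ Hsum v x := fun x hx => Nat.sInf_le ⟨x, hx, rfl⟩
  have hlemax : ∀ x ∈ S1, Hsum v x ≤ maxOnS1 (Hsum v) := fun x hx => le_csSup hbdd ⟨x, hx, rfl⟩
  -- find a minimum point off the boundary set, via window 1
  obtain ⟨x₀, hx₀S, hx₀⟩ := hminmem
  have hs₁q1' : s₁ (q₁+1) = s₁ 0 + 2*π := by rw [hs₁q1, hs₁0]
  obtain ⟨j₀, hj₀q, hj₀⟩ := image_char v hs₁q1' h₁1 h₁2 (fun j hj1 hj2 => (h₁3 j hj1 hj2).1)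
    (by rw [hs₁0]; exact h₁v0) x₀ hx₀S
  set a₂ := (s₁ j₀ + s₁ (j₀+1))/2 with ha₂def
  have ha₂mem : a₂ ∈ Ioo (s₁ j₀) (s₁ (j₀+1)) := by
    have := h₁1 j₀ hj₀q
    constructor <;> (rw [ha₂def]; linarith)
  have ha₂B : e a₂ ∉ ⋃ i, bTrace (v i).1 (v i).2 := by
    refine interior_off h₁1 hs₁q1' ?_ j₀ hj₀q a₂ ha₂mem
    intro θ hθ
    rw [← hs₁0] at h₁bd
    exact h₁bd θ hθ
  have ha₂val : Hsum v (e a₂) = minOnS1 (Hsum v) := by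
    rw [h₁2 j₀ hj₀q a₂ ha₂mem, ← hj₀, hx₀]
  -- window 2, based at a minimum point
  obtain ⟨q, s, val, hs0, hsq1, h1, h2, h3, hbd, hv0, hvq, hcardB⟩ :=
    window v hr hdisj hcard hBfin ha₂B
  have hsm : ∀ {j1 j2 : ℕ}, j1 < j2 → j2 ≤ q + 1 → s j1 < s j2 := smono_of_succ h1
  set m := minOnS1 (Hsum v) with hmdef
  set M := maxOnS1 (Hsum v) with hMdef
  have hv0m : val 0 = m := by rw [hv0, ha₂val]
  have hvqm : val q = m := by rw [hvq, ha₂val]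
  have hsq1' : s (q+1) = s 0 + 2*π := by rw [hsq1, hs0]
  have hvalmem : ∀ j, j ≤ q → val j ∈ Hsum v '' S1 := by
    intro j hj
    have hgap := h1 j hj
    have hmid : (s j + s (j+1))/2 ∈ Ioo (s j) (s (j+1)) := by constructor <;> linarith
    exact ⟨e ((s j + s (j+1))/2), hS1mem _, h2 j hj _ hmid⟩
  have hvm : ∀ j, j ≤ q → m ≤ val j ∧ val j ≤ M := by
    intro j hj
    obtain ⟨x, hxS, hxv⟩ := hvalmem j hj
    exact ⟨hxv ▸ hminle x hxS, hxv ▸ hlemax x hxS⟩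
  -- max is attained at some index
  obtain ⟨xM, hxMS, hxM⟩ := hmaxmem
  obtain ⟨jM, hjMq, hjM⟩ := image_char v hsq1' h1 h2 (fun j hj1 hj2 => (h3 j hj1 hj2).1)
    (by rw [hs0]; exact hv0) xM hxMS
  have hjMval : val jM = M := by rw [← hjM, hxM]
  -- per-level computation of the number of connected components
  have hkey : ∀ k, k ∈ Finset.Icc (m+1) M →
      numCC (superlevel (Hsum v) k)
        = ((Finset.Icc 1 q).filter (fun j => val (j-1) < k ∧ k ≤ val j)).card ∧
      1 ≤ numCC (superlevel (Hsum v) k) := by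
    intro k hk
    rw [Finset.mem_Icc] at hk
    set Sk := (Finset.range (q+1)).filter (fun j => k ≤ val j) with hSkdef
    have hSkmem : ∀ j, j ∈ Sk ↔ (j ≤ q ∧ k ≤ val j) := by
      intro j
      rw [hSkdef, Finset.mem_filter, Finset.mem_range]
      omega
    have hSkb : ∀ j ∈ Sk, 1 ≤ j ∧ j + 1 ≤ q := by
      intro j hj
      rw [hSkmem] at hj
      constructor
      · rcases Nat.eq_zero_or_pos j with rfl | hj0
        · rw [hv0m] at hj; omega
        · exact hj0
      · rcases Nat.lt_or_ge j q with h | h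
        · omega
        · have : j = q := by omega
          rw [this, hvqm] at hj
          omega
    obtain ⟨T, hTprop, hTcard, hTunion, hTdisj⟩ := merge_runs hsm Sk hSkb
    -- superlevel set as union of basic arcs
    have hsup : superlevel (Hsum v) k = ⋃ j ∈ Sk, e '' Icc (s j) (s (j+1)) := by
      apply Set.Subset.antisymm
      · rintro x ⟨hxS1, hxk⟩
        have hx1 : ‖x‖ = 1 := hxS1
        obtain ⟨θ, hθI, rfl⟩ := e_exists_rep hx1 (s 0)
        rcases eq_or_lt_of_le hθI.1 with heq | hlt
        · exfalso
          rw [← heq, hs0, ha₂val] at hxk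
          omega
        · obtain ⟨j, hjq, hθIoc⟩ := locate h1 ⟨hlt, by rw [hsq1']; exact hθI.2.le⟩
          rcases eq_or_lt_of_le hθIoc.2 with heq | hlt2
          · have hj1q : j + 1 ≤ q := by
              by_contra hc
              have hjq' : j = q := by omega
              rw [heq, hjq', hsq1'] at hθI
              exact absurd hθI.2 (by simp)
            have hmax := (h3 (j+1) (by omega) hj1q).1
            rw [show j + 1 - 1 = j from by omega] at hmax
            rw [heq] at hxk
            rw [hmax] at hxk
            rcases le_or_gt k (val j) with hcase | hcase
            · apply Set.mem_biUnion (hSkmem j |>.mpr ⟨hjq, hcase⟩)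
              exact ⟨s (j+1), ⟨(h1 j hjq).le, le_rfl⟩, by rw [heq]⟩
            · have hvk : k ≤ val (j+1) := by
                rcases max_cases (val j) (val (j+1)) with ⟨hm, _⟩ | ⟨hm, _⟩ <;> omega
              apply Set.mem_biUnion (hSkmem (j+1) |>.mpr ⟨hj1q, hvk⟩)
              exact ⟨s (j+1), ⟨le_rfl, (h1 (j+1) hj1q).le⟩, by rw [heq]⟩
          · have hval : Hsum v (e θ) = val j := h2 j hjq θ ⟨hθIoc.1, hlt2⟩
            apply Set.mem_biUnion (hSkmem j |>.mpr ⟨hjq, hval ▸ hxk⟩)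
            exact ⟨θ, ⟨hθIoc.1.le, hθIoc.2⟩, rfl⟩
      · intro x hx
        obtain ⟨j, hj, θ, hθ, rfl⟩ := by
          simpa only [Set.mem_iUnion, exists_prop] using hx
        obtain ⟨hj1, hj2⟩ := hSkb j hj
        have hjk := (hSkmem j).mp hj
        refine ⟨hS1mem θ, ?_⟩
        rcases eq_or_lt_of_le hθ.1 with heq | hlt
        · rw [← heq]
          rw [(h3 j hj1 (by omega)).1]
          exact le_trans hjk.2 (le_max_right _ _)
        · rcases eq_or_lt_of_le hθ.2 with heq | hlt2
          · rw [heq]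
            have hmax := (h3 (j+1) (by omega) hj2).1
            rw [show j + 1 - 1 = j from by omega] at hmax
            rw [hmax]
            exact le_trans hjk.2 (le_max_left _ _)
          · rw [h2 j (by omega) θ ⟨hlt, hlt2⟩]
            exact hjk.2
    have hsup2 : superlevel (Hsum v) k = ⋃ p ∈ T, e '' Icc (s p.1) (s (p.2+1)) := by
      rw [hsup]
      have e1 : (⋃ j ∈ Sk, e '' Icc (s j) (s (j+1))) = e '' (⋃ j ∈ Sk, Icc (s j) (s (j+1))) := by
        rw [Set.image_iUnion₂]
      have e2 : (⋃ p ∈ T, e '' Icc (s p.1) (s (p.2+1)))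
          = e '' (⋃ p ∈ T, Icc (s p.1) (s (p.2+1))) := by
        rw [Set.image_iUnion₂]
      rw [e1, e2, hTunion]
    -- interval arcs stay within one period
    have hrange : ∀ p : ℕ × ℕ, p ∈ T → Icc (s p.1) (s (p.2+1)) ⊆ Ico (s 0) (s 0 + 2*π) := by
      intro p hp θ hθ
      obtain ⟨hp1, hp2, hp3, _⟩ := hTprop p hp
      constructor
      · exact lt_of_lt_of_le (hsm (by omega) (by omega)) hθ.1 |>.le
      · rw [← hsq1']
        exact lt_of_le_of_lt hθ.2 (hsm (by omega) (by omega))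
    -- number of connected components via the partition
    have hnum : numCC (superlevel (Hsum v) k) = T.card := by
      set en : Fin T.card → ℕ × ℕ := fun i => (T.equivFin.symm i : ℕ × ℕ) with hendef
      have henT : ∀ i, en i ∈ T := fun i => (T.equivFin.symm i).2
      have heninj : Function.Injective en := fun i i' hii =>
        T.equivFin.symm.injective (Subtype.ext hii)
      apply numCC_of_partition (fun i => e '' Icc (s (en i).1) (s ((en i).2 + 1)))
      · intro i
        obtain ⟨hp1, hp2, hp3, _⟩ := hTprop _ (henT i)
        exact ⟨e (s (en i).1), ⟨s (en i).1, ⟨le_rfl, (hsm (by omega) (by omega)).le⟩, rfl⟩⟩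
      · intro i
        exact arc_compact _ _
      · intro i
        exact arc_preconnected _ _
      · intro i i' hii
        have hpp : en i ≠ en i' := fun hc => hii (heninj hc)
        have hdisjR := hTdisj _ (henT i) _ (henT i') hpp
        apply Set.eq_empty_iff_forall_notMem.mpr
        rintro x ⟨⟨θ, hθ, rfl⟩, ⟨θ', hθ', hee⟩⟩
        have hθI := hrange _ (henT i) hθ
        have hθ'I := hrange _ (henT i') hθ'
        have : θ' = θ := e_injOn_Ico (s 0) θ' hθ'I θ hθI hee
        subst this
        have : θ' ∈ Icc (s (en i).1) (s ((en i).2+1)) ∩ Icc (s (en i').1) (s ((en i').2+1)) :=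
          ⟨hθ, hθ'⟩
        rw [hdisjR] at this
        exact this
      · rw [hsup2]
        ext x
        simp only [Set.mem_iUnion, exists_prop]
        constructor
        · rintro ⟨p, hp, hx⟩
          exact ⟨T.equivFin ⟨p, hp⟩, by
            have : en (T.equivFin ⟨p, hp⟩) = p := by
              rw [hendef]
              simp
            rw [this]
            exact hx⟩
        · rintro ⟨i, hx⟩
          exact ⟨en i, henT i, hx⟩
    constructor
    · rw [hnum, hTcard]
      congr 1
      ext j
      simp only [Finset.mem_filter, Finset.mem_Icc]
      constructor
      · rintro ⟨hjS, hjst⟩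
        obtain ⟨hb1, hb2⟩ := hSkb j hjS
        have hjk := (hSkmem j).mp hjS
        refine ⟨⟨hb1, by omega⟩, ?_, hjk.2⟩
        by_contra hc
        push_neg at hc
        exact hjst ((hSkmem (j-1)).mpr ⟨by omega, hc⟩)
      · rintro ⟨⟨hj1, hjq⟩, hlt, hge⟩
        refine ⟨(hSkmem j).mpr ⟨hjq, hge⟩, fun hc => ?_⟩
        have := (hSkmem (j-1)).mp hc
        omega
    · rw [hnum, hTcard]
      have hSkne : (Sk.filter (fun j => ¬ (j-1) ∈ Sk)).Nonempty := by
        have hjMSk : jM ∈ Sk := (hSkmem jM).mpr ⟨hjMq, by rw [hjMval]; exact hk.2⟩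
        have hne : Sk.Nonempty := ⟨jM, hjMSk⟩
        refine ⟨Sk.min' hne, Finset.mem_filter.mpr ⟨Sk.min'_mem hne, fun hc => ?_⟩⟩
        have h1' := Sk.min'_le _ hc
        have h2' := (hSkb _ (Sk.min'_mem hne)).1
        omega
      exact Finset.card_pos.mpr hSkne
  -- summing over levels
  have hsum1 : ∀ j, 1 ≤ j → j ≤ q →
      ((Finset.Icc (m+1) M).filter (fun k => val (j-1) < k ∧ k ≤ val j)).card
        = val j - val (j-1) := by
    intro j hj1 hjq
    have hmj := hvm (j-1) (by omega)
    have hmj2 := hvm j hjq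
    have heq : (Finset.Icc (m+1) M).filter (fun k => val (j-1) < k ∧ k ≤ val j)
        = Finset.Icc (val (j-1) + 1) (val j) := by
      ext k'
      rw [Finset.mem_filter, Finset.mem_Icc, Finset.mem_Icc]
      omega
    rw [heq, Nat.card_Icc]
    omega
  have hsumCC : ∑ k ∈ Finset.Icc (m+1) M, numCC (superlevel (Hsum v) k)
      = ∑ j ∈ Finset.Icc 1 q, (val j - val (j-1)) := by
    rw [Finset.sum_congr rfl (fun k hk => (hkey k hk).1)]
    have hcf : ∀ k : ℕ, ((Finset.Icc 1 q).filter (fun j => val (j-1) < k ∧ k ≤ val j)).card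
        = ∑ j ∈ Finset.Icc 1 q, if val (j-1) < k ∧ k ≤ val j then 1 else 0 := by
      intro k
      rw [Finset.card_filter]
    simp_rw [hcf]
    rw [Finset.sum_comm]
    apply Finset.sum_congr rfl
    intro j hj
    rw [Finset.mem_Icc] at hj
    rw [← Finset.card_filter]
    exact hsum1 j hj.1 hj.2
  set U := ∑ j ∈ Finset.Icc 1 q, (val j - val (j-1)) with hUdef
  set D := ∑ j ∈ Finset.Icc 1 q, (val (j-1) - val j) with hDdef
  have hUD : U + D = q := by
    rw [hUdef, hDdef, ← Finset.sum_add_distrib]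
    have hterm : ∀ j ∈ Finset.Icc 1 q, (val j - val (j-1)) + (val (j-1) - val j) = 1 := by
      intro j hj
      rw [Finset.mem_Icc] at hj
      rcases (h3 j hj.1 hj.2).2 with h | h <;> omega
    rw [Finset.sum_congr rfl hterm, Finset.sum_const, Nat.card_Icc]
    simp
  have hUDeq : U = D := by
    have hZ : (U:ℤ) - (D:ℤ) = 0 := by
      rw [hUdef, hDdef]
      push_cast
      rw [← Finset.sum_sub_distrib]
      have hterm : ∀ j ∈ Finset.Icc 1 q,
          ((val j - val (j-1) : ℕ):ℤ) - ((val (j-1) - val j : ℕ):ℤ)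
            = (val j : ℤ) - (val (j-1) : ℤ) := by
        intro j _
        omega
      rw [Finset.sum_congr rfl hterm]
      rw [telescope_Icc (fun l => (val l : ℤ)) q, hv0m, hvqm]
      ring
    omega
  -- conclusion
  have htau : M - m + tau (Hsum v) = U := by
    rw [tau, ← hmdef, ← hMdef]
    have hcardIcc : (Finset.Icc (m+1) M).card = M - m := by
      rw [Nat.card_Icc]
      omega
    calc M - m + ∑ k ∈ Finset.Icc (m+1) M, (numCC (superlevel (Hsum v) k) - 1)
        = ∑ k ∈ Finset.Icc (m+1) M, 1 + ∑ k ∈ Finset.Icc (m+1) M, (numCC (superlevel (Hsum v) k) - 1) := by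
          rw [Finset.sum_const, smul_eq_mul, mul_one, hcardIcc]
    _ = ∑ k ∈ Finset.Icc (m+1) M, (1 + (numCC (superlevel (Hsum v) k) - 1)) := by
          rw [Finset.sum_add_distrib]
    _ = ∑ k ∈ Finset.Icc (m+1) M, numCC (superlevel (Hsum v) k) := by
          apply Finset.sum_congr rfl
          intro k hk
          have := (hkey k hk).2
          omega
    _ = U := hsumCC
  rw [hcardB, htau]
  omega
end
end

section
/- Let (m_1,r_1),…,(m_n,r_n) with m_i ∈ ℝ², r_i > 0, and let H_v : S¹ → ℕ be the sum of the signal functions. Let G : S¹ → ℕ be properly upper semicontinuous with {x ∈ S¹ : H_v(x) ≠ G(x)} finite. Then the number of indices i ∈ {1,…,n} such that ∂h_{(m_i,r_i)} has exactly 2 elements is at least G* − G_* + τ(G), where G* = max G and G_* = min G. -/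
noncomputable section

open scoped BigOperators
open Classical

/-- the threshold -/
def cst (m : ℂ) (r : ℝ) : ℝ := (1 + Complex.normSq m - r^2)/2

lemma normSq_one_of (x : ℂ) (hx : ‖x‖ = 1) : Complex.normSq x = 1 := by
  rw [← Complex.sq_norm, hx]; norm_num

lemma dist_sq (m x : ℂ) (hx : ‖x‖ = 1) :
    ‖x - m‖^2 = 1 + Complex.normSq m - 2 * (x * (starRingEnd ℂ) m).re := by
  have : ‖x - m‖^2 = Complex.normSq (x - m) := by
    rw [← Complex.sq_norm]
  rw [this, Complex.normSq_sub, normSq_one_of x hx]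

lemma mem_disk_iff (m : ℂ) (r : ℝ) (hr : 0 < r) (x : ℂ) (hx : ‖x‖ = 1) :
    (‖x - m‖ ≤ r ↔ cst m r ≤ (x * (starRingEnd ℂ) m).re) := by
  have h1 : ‖x - m‖ ≤ r ↔ ‖x - m‖^2 ≤ r^2 := by
    constructor
    · intro h; exact pow_le_pow_left₀ (norm_nonneg _) h 2
    · intro h; nlinarith [norm_nonneg (x - m), hr.le]
  rw [h1, dist_sq m x hx]; unfold cst; constructor <;> intro h <;> linarith

lemma mem_bdry_iff (m : ℂ) (r : ℝ) (hr : 0 < r) (x : ℂ) (hx : ‖x‖ = 1) :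
    (‖x - m‖ = r ↔ (x * (starRingEnd ℂ) m).re = cst m r) := by
  have h1 : ‖x - m‖ = r ↔ ‖x - m‖^2 = r^2 := by
    constructor
    · intro h; rw [h]
    · intro h
      have h2 : (0:ℝ) ≤ ‖x - m‖ := norm_nonneg _
      nlinarith
  rw [h1, dist_sq m x hx]; unfold cst; constructor <;> intro h <;> linarith

lemma rot_norm (t : ℝ) (x : ℂ) (hx : ‖x‖ = 1) : ‖rot t x‖ = 1 := by
  rw [rot, norm_mul, Complex.norm_exp_ofReal_mul_I, hx,
    one_mul]

lemma rot_mem_S1 (t : ℝ) (x : ℂ) (hx : x ∈ S1) : rot t x ∈ S1 := rot_norm t x hx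

lemma re_exp_mul (t : ℝ) (w : ℂ) :
    (Complex.exp (t * Complex.I) * w).re = w.re * Real.cos t - w.im * Real.sin t := by
  rw [Complex.exp_mul_I]
  simp [add_mul, Complex.mul_re, Complex.cos_ofReal_re, Complex.sin_ofReal_re,
    Complex.cos_ofReal_im, Complex.sin_ofReal_im, Complex.I_re, Complex.I_im]
  ring

lemma rot_mul_conj (t : ℝ) (x m : ℂ) :
    (rot t x * (starRingEnd ℂ) m) = Complex.exp (t * Complex.I) * (x * (starRingEnd ℂ) m) := by
  rw [rot]; ring

lemma signal_rot (m : ℂ) (r : ℝ) (hr : 0 < r) (t : ℝ) (x : ℂ) (hx : ‖x‖ = 1) :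
    signal m r (rot t x) =
      if cst m r ≤ (x * (starRingEnd ℂ) m).re * Real.cos t - (x * (starRingEnd ℂ) m).im * Real.sin t
      then 1 else 0 := by
  unfold signal
  have : ‖rot t x - m‖ ≤ r ↔ cst m r ≤ (x * (starRingEnd ℂ) m).re * Real.cos t
      - (x * (starRingEnd ℂ) m).im * Real.sin t := by
    rw [mem_disk_iff m r hr _ (rot_norm t x hx), rot_mul_conj, re_exp_mul]
  simp only [this]

lemma rot_rot (s t : ℝ) (x : ℂ) : rot s (rot t x) = rot (t + s) x := by
  unfold rot
  rw [← mul_assoc, ← Complex.exp_add, Complex.ofReal_add]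
  ring_nf

lemma rot_zero (x : ℂ) : rot 0 x = x := by simp [rot]
lemma sin_lb {t : ℝ} (h0 : 0 < t) (h1 : t ≤ 1) : t/2 ≤ Real.sin t := by
  have h := Real.sin_gt_sub_cube h0
  have h2 : t^2 ≤ 1 := by nlinarith
  nlinarith

lemma cos_lb (t : ℝ) : 1 - t^2/2 ≤ Real.cos t := Real.one_sub_sq_div_two_le_cos

lemma cos_lt_one' {t : ℝ} (h0 : 0 < t) (h1 : t ≤ 1) : Real.cos t < 1 := by
  have : Real.cos t < Real.cos 0 := by
    apply Real.strictAntiOn_cos ⟨le_refl 0, Real.pi_pos.le⟩ _ h0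
    constructor
    · linarith
    · linarith [Real.pi_gt_three]
  simpa using this

/-- One-sided sign dichotomy for `t ↦ a cos t + b sin t` vs `c`, just to the right of 0. -/
lemma key (a b c : ℝ) : ∃ δ > (0:ℝ),
    (∀ t ∈ Set.Ioo (0:ℝ) δ, c ≤ a * Real.cos t + b * Real.sin t) ∨
    (∀ t ∈ Set.Ioo (0:ℝ) δ, ¬ c ≤ a * Real.cos t + b * Real.sin t) := by
  rcases lt_trichotomy a c with hac | hac | hac
  · -- a < c : locally < c
    have hc : ContinuousAt (fun t : ℝ => a * Real.cos t + b * Real.sin t) 0 := by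
      fun_prop
    have : ∀ᶠ t in nhds (0:ℝ), a * Real.cos t + b * Real.sin t < c := by
      apply hc.eventually_lt continuousAt_const
      simpa using hac
    obtain ⟨ε, hε, h⟩ := Metric.eventually_nhds_iff.1 this
    exact ⟨ε, hε, Or.inr fun t ht => not_le.2 (h (by simp [abs_of_pos ht.1]; exact ht.2))⟩
  · -- a = c
    subst hac
    rcases lt_trichotomy b 0 with hb | hb | hb
    · -- b < 0 : strictly below on the right
      refine ⟨min 1 ((-b)/(|a|+1)), lt_min one_pos (div_pos (neg_pos.2 hb) (by positivity)), Or.inr fun t ht => not_le.2 ?_⟩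
      obtain ⟨ht0, ht1⟩ := ht
      have htle1 : t ≤ 1 := le_of_lt (lt_of_lt_of_le ht1 (min_le_left _ _))
      have htb : t < (-b)/(|a|+1) := lt_of_lt_of_le ht1 (min_le_right _ _)
      have hs := sin_lb ht0 htle1
      have hcos := cos_lb t
      have hcos1 := Real.cos_le_one t
      have ha1 : a ≤ |a| := le_abs_self a
      have ha2 : -|a| ≤ a := neg_abs_le a
      have h3 : t * (|a|+1) < -b := (lt_div_iff₀ (by positivity)).1 htb
      nlinarith [abs_nonneg a, sq_nonneg t]
    · -- b = 0
      subst hb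
      rcases lt_trichotomy a 0 with ha | ha | ha
      · refine ⟨1, one_pos, Or.inl fun t ht => ?_⟩
        have := Real.cos_le_one t
        nlinarith
      · subst ha; exact ⟨1, one_pos, Or.inl fun t _ => by simp⟩
      · refine ⟨1, one_pos, Or.inr fun t ht => not_le.2 ?_⟩
        have := cos_lt_one' ht.1 ht.2.le
        nlinarith
    · -- 0 < b : strictly above on the right
      refine ⟨min 1 (b/(|a|+1)), by positivity, Or.inl fun t ht => ?_⟩
      obtain ⟨ht0, ht1⟩ := ht
      have htle1 : t ≤ 1 := le_of_lt (lt_of_lt_of_le ht1 (min_le_left _ _))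
      have htb : t < b/(|a|+1) := lt_of_lt_of_le ht1 (min_le_right _ _)
      have hs := sin_lb ht0 htle1
      have hcos := cos_lb t
      have hcos1 := Real.cos_le_one t
      have ha1 : a ≤ |a| := le_abs_self a
      have ha2 : -|a| ≤ a := neg_abs_le a
      have h3 : t * (|a|+1) < b := (lt_div_iff₀ (by positivity)).1 htb
      nlinarith [abs_nonneg a, sq_nonneg t]
  · -- c < a : locally ≥ c
    have hc : ContinuousAt (fun t : ℝ => a * Real.cos t + b * Real.sin t) 0 := by
      fun_prop
    have : ∀ᶠ t in nhds (0:ℝ), c < a * Real.cos t + b * Real.sin t := by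
      apply continuousAt_const.eventually_lt hc
      simpa using hac
    obtain ⟨ε, hε, h⟩ := Metric.eventually_nhds_iff.1 this
    exact ⟨ε, hε, Or.inl fun t ht => (h (by simp [abs_of_pos ht.1]; exact ht.2)).le⟩
open Filter Topology

lemma ev_right_iff {P : ℝ → Prop} :
    (∀ᶠ t in 𝓝[>] (0:ℝ), P t) ↔ ∃ δ > (0:ℝ), ∀ t ∈ Set.Ioo (0:ℝ) δ, P t := by
  constructor
  · intro h
    obtain ⟨δ, hδ, hsub⟩ := mem_nhdsGT_iff_exists_Ioo_subset.1 h
    exact ⟨δ, hδ, fun t ht => hsub ht⟩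
  · rintro ⟨δ, hδ, h⟩
    exact mem_nhdsGT_iff_exists_Ioo_subset.2 ⟨δ, hδ, fun t ht => h t ht⟩

lemma ev_left_iff {P : ℝ → Prop} :
    (∀ᶠ t in 𝓝[<] (0:ℝ), P t) ↔ ∃ δ > (0:ℝ), ∀ t ∈ Set.Ioo (-δ) (0:ℝ), P t := by
  constructor
  · intro h
    obtain ⟨δ', hδ', hsub⟩ := mem_nhdsLT_iff_exists_Ioo_subset.1 h
    refine ⟨-δ', neg_pos.2 hδ', fun t ht => hsub ?_⟩
    rwa [neg_neg] at ht
  · rintro ⟨δ, hδ, h⟩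
    exact mem_nhdsLT_iff_exists_Ioo_subset.2
      ⟨-δ, Set.mem_Iio.2 (by linarith), fun t ht => h t ht⟩

open Filter Topology

lemma norm_eq_one_of_normSq {x : ℂ} (h : Complex.normSq x = 1) : ‖x‖ = 1 := by
  have h1 : ‖x‖^2 = 1 := by rw [← Complex.sq_norm] at h; exact h
  nlinarith [norm_nonneg x]

lemma sig_right (m : ℂ) (r : ℝ) (hr : 0 < r) (x : ℂ) :
    ∃ e : ℕ, e ≤ 1 ∧ (‖x‖ = 1 → ∀ᶠ t in 𝓝[>] (0:ℝ), signal m r (rot t x) = e) := by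
  obtain ⟨δ, hδ, hcase⟩ := key (x * (starRingEnd ℂ) m).re (-(x * (starRingEnd ℂ) m).im) (cst m r)
  rcases hcase with h | h
  · refine ⟨1, le_refl 1, fun hx => ev_right_iff.2 ⟨δ, hδ, fun t ht => ?_⟩⟩
    rw [signal_rot m r hr t x hx, if_pos]
    have := h t ht; linarith [this]
  · refine ⟨0, zero_le_one, fun hx => ev_right_iff.2 ⟨δ, hδ, fun t ht => ?_⟩⟩
    rw [signal_rot m r hr t x hx, if_neg]
    have := h t ht; intro hc; apply this; linarith

lemma sig_left (m : ℂ) (r : ℝ) (hr : 0 < r) (x : ℂ) :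
    ∃ e : ℕ, e ≤ 1 ∧ (‖x‖ = 1 → ∀ᶠ t in 𝓝[<] (0:ℝ), signal m r (rot t x) = e) := by
  obtain ⟨δ, hδ, hcase⟩ := key (x * (starRingEnd ℂ) m).re ((x * (starRingEnd ℂ) m).im) (cst m r)
  rcases hcase with h | h
  · refine ⟨1, le_refl 1, fun hx => ev_left_iff.2 ⟨δ, hδ, fun t ht => ?_⟩⟩
    rw [signal_rot m r hr t x hx, if_pos]
    have := h (-t) ⟨by linarith [ht.2], by linarith [ht.1]⟩
    rw [Real.cos_neg, Real.sin_neg] at this; linarith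
  · refine ⟨0, zero_le_one, fun hx => ev_left_iff.2 ⟨δ, hδ, fun t ht => ?_⟩⟩
    rw [signal_rot m r hr t x hx, if_neg]
    have := h (-t) ⟨by linarith [ht.2], by linarith [ht.1]⟩
    rw [Real.cos_neg, Real.sin_neg] at this
    intro hc; apply this; linarith

/-- The canonical down-jump point of the disk `(m,r)`. -/
def djpt (m : ℂ) (r : ℝ) : ℂ :=
  (⟨cst m r, Real.sqrt (Complex.normSq m - (cst m r)^2)⟩ : ℂ) * m / ((Complex.normSq m : ℝ) : ℂ)

lemma downjump (m : ℂ) (r : ℝ) (hr : 0 < r) (y : ℂ) (hy : ‖y‖ = 1)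
    (h1 : ∀ᶠ t in 𝓝[<] (0:ℝ), signal m r (rot t y) = 1)
    (h0 : ∀ᶠ t in 𝓝[>] (0:ℝ), signal m r (rot t y) = 0) :
    y = djpt m r ∧ (bTrace m r).ncard = 2 := by
  set w := y * (starRingEnd ℂ) m with hw
  set c := cst m r with hc
  -- translate to inequalities
  have h1' : ∀ᶠ t in 𝓝[<] (0:ℝ), c ≤ w.re * Real.cos t - w.im * Real.sin t := by
    filter_upwards [h1] with t ht
    rw [signal_rot m r hr t y hy, ← hw, ← hc] at ht
    by_contra hcon; rw [if_neg hcon] at ht; exact absurd ht (by norm_num)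
  have h0' : ∀ᶠ t in 𝓝[>] (0:ℝ), ¬ c ≤ w.re * Real.cos t - w.im * Real.sin t := by
    filter_upwards [h0] with t ht
    rw [signal_rot m r hr t y hy, ← hw, ← hc] at ht
    by_contra hcon; rw [if_pos hcon] at ht; exact absurd ht (by norm_num)
  have hfc : Continuous (fun t : ℝ => w.re * Real.cos t - w.im * Real.sin t) := by fun_prop
  -- w.re = c
  have hre : w.re = c := by
    have t1 : Filter.Tendsto (fun t : ℝ => w.re * Real.cos t - w.im * Real.sin t)
        (𝓝[<] (0:ℝ)) (𝓝 w.re) := by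
      have := (hfc.tendsto 0).mono_left (nhdsWithin_le_nhds (s := Set.Iio (0:ℝ)))
      simpa using this
    have t2 : Filter.Tendsto (fun t : ℝ => w.re * Real.cos t - w.im * Real.sin t)
        (𝓝[>] (0:ℝ)) (𝓝 w.re) := by
      have := (hfc.tendsto 0).mono_left (nhdsWithin_le_nhds (s := Set.Ioi (0:ℝ)))
      simpa using this
    have hge : c ≤ w.re := ge_of_tendsto t1 h1'
    have hle : w.re ≤ c := le_of_tendsto t2 (by filter_upwards [h0'] with t ht; linarith [not_le.1 ht])
    linarith
  -- w.im > 0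
  have him : 0 < w.im := by
    by_contra hle
    push_neg at hle
    rcases eq_or_lt_of_le hle with heq | hlt
    · -- w.im = 0
      obtain ⟨δ0, hδ0, hd0⟩ := ev_right_iff.1 h0'
      obtain ⟨δ1, hδ1, hd1⟩ := ev_left_iff.1 h1'
      set t0 := min δ0 1 / 2 with ht0def
      have ht0 : t0 ∈ Set.Ioo (0:ℝ) δ0 := by
        constructor
        · positivity
        · have := min_le_left δ0 (1:ℝ); have := lt_min hδ0 one_pos; simp only [ht0def]; linarith
      have ht0le : t0 ≤ 1 := by
        have := min_le_right δ0 (1:ℝ); simp only [ht0def]; linarith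
      have hcos0 := cos_lt_one' ht0.1 ht0le
      have h00 := hd0 t0 ht0
      rw [hre, heq] at h00
      have hcpos : 0 < c := by
        by_contra hcle; push_neg at hcle
        apply h00
        nlinarith [Real.cos_le_one t0]
      set t1 := -(min δ1 1 / 2) with ht1def
      have ht1 : t1 ∈ Set.Ioo (-δ1) (0:ℝ) := by
        constructor
        · have := min_le_left δ1 (1:ℝ); have := lt_min hδ1 one_pos; simp only [ht1def]; linarith
        · have := lt_min hδ1 one_pos; simp only [ht1def]; linarith
      have h11 := hd1 t1 ht1
      rw [hre, heq] at h11
      have hcos1 : Real.cos t1 < 1 := by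
        rw [ht1def, Real.cos_neg]
        apply cos_lt_one'
        · have := lt_min hδ1 one_pos; linarith
        · have := min_le_right δ1 (1:ℝ); linarith
      nlinarith
    · -- w.im < 0
      obtain ⟨δ0, hδ0, hd0⟩ := ev_right_iff.1 h0'
      set t := min (δ0/2) (min 1 ((-w.im)/(|c|+1))) with htdef
      have htpos : 0 < t := by
        apply lt_min (by linarith)
        exact lt_min one_pos (div_pos (by linarith) (by positivity))
      have htδ : t < δ0 := by
        have := min_le_left (δ0/2) (min 1 ((-w.im)/(|c|+1))); linarith
      have htle1 : t ≤ 1 := le_trans (min_le_right _ _) (min_le_left _ _)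
      have htb : t ≤ (-w.im)/(|c|+1) := le_trans (min_le_right _ _) (min_le_right _ _)
      have h3 : t * (|c|+1) ≤ -w.im := (le_div_iff₀ (by positivity)).1 htb
      apply hd0 t ⟨htpos, htδ⟩
      rw [hre]
      have hs := sin_lb htpos htle1
      have hcos := cos_lb t
      have hcos1 := Real.cos_le_one t
      have hc1 : c ≤ |c| := le_abs_self c
      have hc2 : -|c| ≤ c := neg_abs_le c
      nlinarith [abs_nonneg c, sq_nonneg t]
  -- normSq relation
  have hnsw : Complex.normSq w = Complex.normSq m := by
    rw [hw, Complex.normSq_mul, Complex.normSq_conj, normSq_one_of y hy, one_mul]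
  have hR : Complex.normSq m = c^2 + w.im^2 := by
    rw [← hnsw, Complex.normSq_apply, ← hre]; ring
  have hm0 : Complex.normSq m ≠ 0 := by nlinarith
  have hmne : m ≠ 0 := fun h => hm0 (by rw [h]; simp)
  have hRC : ((Complex.normSq m : ℝ) : ℂ) ≠ 0 := by
    simpa using hm0
  have hsqrt : Real.sqrt (Complex.normSq m - c^2) = w.im := by
    rw [hR]; ring_nf; rw [Real.sqrt_sq him.le]
  have hweq : w = (⟨c, w.im⟩ : ℂ) := Complex.ext hre rfl
  have hconjm : (starRingEnd ℂ) m * m = ((Complex.normSq m : ℝ) : ℂ) := by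
    rw [mul_comm, Complex.mul_conj]
  constructor
  · -- y = djpt
    have hyw : y * ((starRingEnd ℂ) m * m) = w * m := by rw [← mul_assoc, ← hw]
    rw [hconjm] at hyw
    rw [djpt, ← hc, hsqrt, ← hweq, eq_div_iff hRC]
    exact hyw
  · -- trace has two points
    set s := w.im with hsdef
    set p := (⟨c, s⟩ : ℂ) * m / ((Complex.normSq m : ℝ) : ℂ) with hpdef
    set q := (⟨c, -s⟩ : ℂ) * m / ((Complex.normSq m : ℝ) : ℂ) with hqdef
    have hnz : ∀ sg : ℝ, sg^2 = s^2 → Complex.normSq (⟨c, sg⟩ : ℂ) = Complex.normSq m := by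
      intro sg hsg
      rw [Complex.normSq_apply, hR]
      show c * c + sg * sg = c^2 + w.im^2
      nlinarith
    have hmemP : ∀ sg : ℝ, sg^2 = s^2 →
        (⟨c, sg⟩ : ℂ) * m / ((Complex.normSq m : ℝ) : ℂ) ∈ bTrace m r := by
      intro sg hsg
      set z := (⟨c, sg⟩ : ℂ) with hzdef
      have hnz1 : Complex.normSq (z * m / ((Complex.normSq m : ℝ) : ℂ)) = 1 := by
        rw [map_div₀, Complex.normSq_mul, hnz sg hsg]
        rw [Complex.normSq_ofReal]
        field_simp
      have hnorm1 : ‖z * m / ((Complex.normSq m : ℝ) : ℂ)‖ = 1 := norm_eq_one_of_normSq hnz1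
      refine ⟨hnorm1, ?_⟩
      rw [mem_bdry_iff m r hr _ hnorm1]
      have : z * m / ((Complex.normSq m : ℝ) : ℂ) * (starRingEnd ℂ) m = z := by
        calc z * m / ((Complex.normSq m : ℝ) : ℂ) * (starRingEnd ℂ) m
            = z * (m * (starRingEnd ℂ) m) / ((Complex.normSq m : ℝ) : ℂ) := by ring
          _ = z * ((Complex.normSq m : ℝ) : ℂ) / ((Complex.normSq m : ℝ) : ℂ) := by
              rw [Complex.mul_conj]
          _ = z := by rw [mul_div_assoc, div_self hRC, mul_one]
      rw [this, hzdef, ← hc]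
    have htr : bTrace m r = {p, q} := by
      ext x
      simp only [bTrace, Set.mem_setOf_eq, Set.mem_insert_iff, Set.mem_singleton_iff]
      constructor
      · rintro ⟨hx1, hx2⟩
        have hxc : (x * (starRingEnd ℂ) m).re = c := (mem_bdry_iff m r hr x hx1).1 hx2
        have hxn : Complex.normSq (x * (starRingEnd ℂ) m) = Complex.normSq m := by
          rw [Complex.normSq_mul, Complex.normSq_conj, normSq_one_of x hx1, one_mul]
        have him2 : ((x * (starRingEnd ℂ) m).im - s) * ((x * (starRingEnd ℂ) m).im + s) = 0 := by
          have h2 := hxn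
          rw [Complex.normSq_apply, hxc] at h2
          linear_combination h2 + hR
        have hxval : ∀ sg : ℝ, (x * (starRingEnd ℂ) m) = (⟨c, sg⟩ : ℂ) →
            x = (⟨c, sg⟩ : ℂ) * m / ((Complex.normSq m : ℝ) : ℂ) := by
          intro sg hsg
          have : x * ((starRingEnd ℂ) m * m) = (⟨c, sg⟩ : ℂ) * m := by
            rw [← mul_assoc, hsg]
          rw [hconjm] at this
          rw [eq_div_iff hRC]
          exact this
        rcases mul_eq_zero.1 him2 with h | h
        · left
          exact hxval s (Complex.ext hxc (show (x * (starRingEnd ℂ) m).im = s by linarith))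
        · right
          exact hxval (-s) (Complex.ext hxc (show (x * (starRingEnd ℂ) m).im = -s by linarith))
      · rintro (rfl | rfl)
        · exact hmemP s rfl
        · exact hmemP (-s) (by ring)
    rw [htr]
    apply Set.ncard_pair
    intro hpq
    rw [hpdef, hqdef, div_eq_div_iff hRC hRC] at hpq
    have : ((⟨c, s⟩ : ℂ) - (⟨c, -s⟩ : ℂ)) * m = 0 := by
      rw [sub_mul]
      rw [mul_comm ((⟨c,s⟩:ℂ) * m) _, mul_comm ((⟨c,-s⟩:ℂ) * m) _] at hpq
      have := mul_left_cancel₀ hRC hpq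
      rw [this]; ring
    rcases mul_eq_zero.1 this with h | h
    · rw [Complex.ext_iff] at h
      simp at h
      linarith [h]
    · exact hmne h

lemma rot_period (t : ℝ) (x : ℂ) : rot (t + 2*Real.pi) x = rot t x := by
  unfold rot
  have h : ((t + 2*Real.pi : ℝ) : ℂ) * Complex.I = t*Complex.I + (2*(Real.pi:ℂ))*Complex.I := by
    push_cast; ring
  rw [h, Complex.exp_add, Complex.exp_two_pi_mul_I, mul_one]

lemma exists_rot (x z : ℂ) (hx : ‖x‖ = 1) (hz : ‖z‖ = 1) :
    ∃ t : ℝ, |t| ≤ Real.pi ∧ z = rot t x := by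
  have hx0 : x ≠ 0 := by intro h; rw [h] at hx; simp at hx
  set u := z / x with hu
  have huabs : ‖u‖ = 1 := by
    rw [hu, norm_div, hx, hz]; norm_num
  refine ⟨u.arg, Complex.abs_arg_le_pi u, ?_⟩
  have h := Complex.norm_mul_exp_arg_mul_I u
  rw [huabs] at h
  rw [rot]
  rw [Complex.ofReal_one, one_mul] at h
  rw [h, hu, div_mul_cancel₀ _ hx0]

lemma chord_sq (t : ℝ) (x : ℂ) (hx : ‖x‖ = 1) :
    ‖rot t x - x‖^2 = 2 - 2*Real.cos t := by
  have h1 : rot t x - x = (Complex.exp (t*Complex.I) - 1) * x := by rw [rot]; ring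
  rw [h1, norm_mul, hx, mul_one]
  have h2 : ‖Complex.exp (t*Complex.I) - 1‖^2 = Complex.normSq (Complex.exp (t*Complex.I) - 1) := by
    rw [← Complex.sq_norm]
  rw [h2, Complex.exp_mul_I]
  rw [Complex.normSq_apply]
  simp [Complex.cos_ofReal_re, Complex.sin_ofReal_re]
  nlinarith [Real.sin_sq_add_cos_sq t]

lemma near_rot (x z : ℂ) (hx : ‖x‖ = 1) (hz : ‖z‖ = 1) (δ : ℝ) (hδ0 : 0 < δ)
    (hδπ : δ ≤ Real.pi) (hnear : ‖z - x‖ < Real.sqrt (2 - 2*Real.cos δ)) :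
    ∃ t : ℝ, |t| < δ ∧ z = rot t x := by
  obtain ⟨t, htπ, hzt⟩ := exists_rot x z hx hz
  refine ⟨t, ?_, hzt⟩
  by_contra habs
  push_neg at habs
  have hcos : Real.cos t ≤ Real.cos δ := by
    rw [← Real.cos_abs t]
    exact Real.cos_le_cos_of_nonneg_of_le_pi hδ0.le htπ habs
  have h1 : ‖z - x‖^2 = 2 - 2*Real.cos t := by rw [hzt]; exact chord_sq t x hx
  have h2 : Real.sqrt (2 - 2*Real.cos δ) ≤ ‖z - x‖ := by
    rw [← Real.sqrt_sq (norm_nonneg (z - x))]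
    apply Real.sqrt_le_sqrt
    rw [h1]; linarith
  linarith

lemma S1_closed : IsClosed S1 := by
  have : S1 = (fun z : ℂ => ‖z‖) ⁻¹' {1} := rfl
  rw [this]
  exact IsClosed.preimage continuous_norm isClosed_singleton

lemma superlevel_closed (G : ℂ → ℕ) (hG : ProperlyUSC G) (k : ℕ) :
    IsClosed (superlevel G k) := by
  rw [← isOpen_compl_iff, Metric.isOpen_iff]
  intro x hxc
  by_cases hx : x ∈ S1
  · have hGx : G x < k := by
      by_contra h; push_neg at h; exact hxc ⟨hx, h⟩
    obtain ⟨a, b, hra, hlb, hmax⟩ := hG x hx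
    obtain ⟨δ1, hδ1, h1⟩ := hra
    obtain ⟨δ2, hδ2, h2⟩ := hlb
    set δ := min (min δ1 δ2) Real.pi with hδdef
    have hδ0 : 0 < δ := lt_min (lt_min hδ1 hδ2) Real.pi_pos
    have hδπ : δ ≤ Real.pi := min_le_right _ _
    have hcosδ : Real.cos δ < 1 := by
      have : Real.cos δ < Real.cos 0 :=
        Real.strictAntiOn_cos ⟨le_refl 0, Real.pi_pos.le⟩ ⟨hδ0.le, hδπ⟩ hδ0
      simpa using this
    refine ⟨Real.sqrt (2 - 2*Real.cos δ), Real.sqrt_pos.2 (by linarith), ?_⟩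
    intro z hzball hzA
    obtain ⟨hz1, hzk⟩ := hzA
    rw [Metric.mem_ball, dist_eq_norm] at hzball
    obtain ⟨t, ht, hzt⟩ := near_rot x z hx hz1 δ hδ0 hδπ hzball
    have ha : a ≤ G x := hmax ▸ le_max_left a b
    have hb : b ≤ G x := hmax ▸ le_max_right a b
    have hδa : δ ≤ δ1 := le_trans (min_le_left _ _) (min_le_left _ _)
    have hδb : δ ≤ δ2 := le_trans (min_le_left _ _) (min_le_right _ _)
    rcases lt_trichotomy t 0 with h | h | h
    · have habs : |t| = -t := abs_of_neg h
      rw [habs] at ht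
      have := h2 t (by linarith) h
      rw [hzt, this] at hzk
      omega
    · rw [h, rot_zero] at hzt
      rw [hzt] at hzk
      omega
    · have habs : |t| = t := abs_of_pos h
      rw [habs] at ht
      have := h1 t h (by linarith)
      rw [hzt, this] at hzk
      omega
  · obtain ⟨ε, hε, hball⟩ := Metric.isOpen_iff.1 S1_closed.isOpen_compl x hx
    exact ⟨ε, hε, fun z hz hzA => (hball hz) hzA.1⟩

lemma drop_exists (G : ℂ → ℕ) (hG : ProperlyUSC G) (k : ℕ)
    (hk : ∃ x0 ∈ S1, G x0 < k) (x : ℂ) (hx : x ∈ superlevel G k) :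
    ∃ y ∈ connectedComponentIn (superlevel G k) x, ∃ ay, rightVal G y ay ∧ ay < k := by
  by_contra hcon
  push_neg at hcon
  set A := superlevel G k with hA
  have hAclosed : IsClosed A := superlevel_closed G hG k
  set C := connectedComponentIn A x with hC
  have hCsub : C ⊆ A := connectedComponentIn_subset A x
  have hCclosed : IsClosed C := by
    rw [hC, connectedComponentIn_eq_image hx]
    exact (hAclosed.isClosedEmbedding_subtypeVal).isClosedMap _ isClosed_connectedComponent
  have hxS1 : x ∈ S1 := hx.1
  have hext : ∀ y ∈ C, ∃ δ > (0:ℝ), ∀ s ∈ Set.Icc 0 δ, rot s y ∈ C := by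
    intro y hy
    have hyA : y ∈ A := hCsub hy
    have hyS1 : y ∈ S1 := hyA.1
    obtain ⟨a, b, hra, hlb, hmax⟩ := hG y hyS1
    have hka : k ≤ a := hcon y hy a hra
    obtain ⟨δ1, hδ1, h1⟩ := hra
    refine ⟨δ1/2, by linarith, fun s hs => ?_⟩
    have hsubA : (fun u : ℝ => rot u y) '' Set.Icc 0 (δ1/2) ⊆ A := by
      rintro _ ⟨u, hu, rfl⟩
      rcases eq_or_lt_of_le hu.1 with h0 | h0
      · show rot u y ∈ A
        rw [← h0, rot_zero]; exact hyA
      · show rot u y ∈ A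
        have heq := h1 u h0 (by linarith [hu.2])
        exact ⟨rot_mem_S1 u y hyS1, by rw [heq]; exact hka⟩
    have hpc : IsPreconnected ((fun u : ℝ => rot u y) '' Set.Icc 0 (δ1/2)) := by
      apply IsPreconnected.image isPreconnected_Icc
      apply Continuous.continuousOn
      unfold rot
      fun_prop
    have hymem : y ∈ (fun u : ℝ => rot u y) '' Set.Icc 0 (δ1/2) :=
      ⟨0, ⟨le_refl 0, by linarith⟩, rot_zero y⟩
    have hsubC := hpc.subset_connectedComponentIn hymem hsubA
    rw [← connectedComponentIn_eq (show y ∈ connectedComponentIn A x from hy)] at hsubC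
    exact hsubC ⟨s, hs, rfl⟩
  have hT : ∀ M : ℝ, 0 ≤ M → rot M x ∈ C := by
    intro M hM
    set TM := Set.Icc (0:ℝ) M ∩ (fun t => rot t x) ⁻¹' C with hTM
    have hTMclosed : IsClosed TM := by
      apply IsClosed.inter isClosed_Icc
      apply IsClosed.preimage _ hCclosed
      unfold rot; fun_prop
    have h0T : (0:ℝ) ∈ TM := by
      refine ⟨⟨le_refl 0, hM⟩, ?_⟩
      simp only [Set.mem_preimage, rot_zero]
      exact mem_connectedComponentIn hx
    have hbdd : BddAbove TM := ⟨M, fun t ht => ht.1.2⟩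
    have husup := hTMclosed.csSup_mem ⟨0, h0T⟩ hbdd
    obtain ⟨⟨hu0, huM⟩, huC⟩ := husup
    rcases eq_or_lt_of_le huM with hend | hlt
    · rw [← hend]; exact huC
    · exfalso
      obtain ⟨δ, hδ, hδC⟩ := hext (rot (sSup TM) x) huC
      have hmem : sSup TM + min δ (M - sSup TM) ∈ TM := by
        have hminpos : 0 < min δ (M - sSup TM) := lt_min hδ (by linarith)
        refine ⟨⟨by linarith, by linarith [min_le_right δ (M - sSup TM)]⟩, ?_⟩
        have := hδC (min δ (M - sSup TM)) ⟨hminpos.le, min_le_left _ _⟩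
        rw [rot_rot] at this
        exact this
      have hle := le_csSup hbdd hmem
      have : 0 < min δ (M - sSup TM) := lt_min hδ (by linarith)
      linarith
  have hS1sub : S1 ⊆ C := by
    intro z hz
    obtain ⟨t, htπ, hzt⟩ := exists_rot x z hxS1 hz
    rcases le_or_gt 0 t with h | h
    · rw [hzt]; exact hT t h
    · rw [hzt, ← rot_period t x]
      apply hT
      have : -t ≤ Real.pi := by rw [← abs_of_neg h]; exact htπ
      linarith [Real.pi_pos]
  obtain ⟨x0, hx0S1, hx0k⟩ := hk
  have : x0 ∈ A := hCsub (hS1sub hx0S1)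
  exact absurd this.2 (by omega)
  

lemma rot_inj (x : ℂ) (hx : x ≠ 0) {s t : ℝ} (hst : |s - t| < 2*Real.pi)
    (h : rot s x = rot t x) : s = t := by
  unfold rot at h
  have h2 := mul_right_cancel₀ hx h
  rw [Complex.exp_eq_exp_iff_exists_int] at h2
  obtain ⟨kk, hkk⟩ := h2
  have him := congrArg Complex.im hkk
  simp [Complex.mul_im, Complex.add_im] at him
  -- him : s = t + kk * (2π)  (roughly)
  have hk0 : kk = 0 := by
    by_contra hk
    have h1 : (1:ℝ) ≤ |(kk:ℝ)| := by
      rw [← Int.cast_abs]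
      exact_mod_cast Int.one_le_abs hk
    have h2 : |s - t| = |(kk:ℝ)| * (2*Real.pi) := by
      have hst2 : s - t = (kk:ℝ) * (2*Real.pi) := by linarith
      rw [hst2, abs_mul, abs_of_pos (by positivity : (0:ℝ) < 2*Real.pi)]
    nlinarith [Real.pi_pos]
  rw [hk0] at him
  push_cast at him
  linarith

open Filter Topology in
lemma exists_good (x : ℂ) (hx : ‖x‖ = 1) (B : Set ℂ) (hB : B.Finite) {P : ℝ → Prop}
    (hP : ∀ᶠ t in 𝓝[>] (0:ℝ), P t) : ∃ t : ℝ, P t ∧ rot t x ∉ B := by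
  have hx0 : x ≠ 0 := by intro h; rw [h] at hx; simp at hx
  obtain ⟨δ, hδ, h⟩ := ev_right_iff.1 hP
  set S := Set.Ioo (0:ℝ) (min δ 1) with hS
  have hSinf : S.Infinite := Set.Ioo_infinite (lt_min hδ one_pos)
  have hbad : (S ∩ (fun t => rot t x) ⁻¹' B).Finite := by
    apply Set.Finite.of_finite_image (f := fun t => rot t x)
    · apply hB.subset; rintro _ ⟨t, ht, rfl⟩; exact ht.2
    · intro s hs t ht hst
      apply rot_inj x hx0 _ hst
      have h1 := hs.1.1; have h2 := hs.1.2; have h3 := ht.1.1; have h4 := ht.1.2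
      have h5 : min δ 1 ≤ 1 := min_le_right _ _
      rw [abs_sub_lt_iff]
      constructor <;> nlinarith [Real.pi_gt_three]
  obtain ⟨t, ht⟩ := (hSinf.diff hbad).nonempty
  refine ⟨t, h t ⟨ht.1.1, lt_of_lt_of_le ht.1.2 (min_le_left _ _)⟩, fun hmem => ht.2 ⟨ht.1, hmem⟩⟩

open Filter Topology in
lemma exists_good_left (x : ℂ) (hx : ‖x‖ = 1) (B : Set ℂ) (hB : B.Finite) {P : ℝ → Prop}
    (hP : ∀ᶠ t in 𝓝[<] (0:ℝ), P t) : ∃ t : ℝ, P t ∧ rot t x ∉ B := by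
  have hx0 : x ≠ 0 := by intro h; rw [h] at hx; simp at hx
  obtain ⟨δ, hδ, h⟩ := ev_left_iff.1 hP
  set S := Set.Ioo (-(min δ 1)) (0:ℝ) with hS
  have hSinf : S.Infinite := Set.Ioo_infinite (by simp [lt_min hδ one_pos])
  have hbad : (S ∩ (fun t => rot t x) ⁻¹' B).Finite := by
    apply Set.Finite.of_finite_image (f := fun t => rot t x)
    · apply hB.subset; rintro _ ⟨t, ht, rfl⟩; exact ht.2
    · intro s hs t ht hst
      apply rot_inj x hx0 _ hst
      have h1 := hs.1.1; have h2 := hs.1.2; have h3 := ht.1.1; have h4 := ht.1.2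
      have h5 : min δ 1 ≤ 1 := min_le_right _ _
      rw [abs_sub_lt_iff]
      constructor <;> nlinarith [Real.pi_gt_three]
  obtain ⟨t, ht⟩ := (hSinf.diff hbad).nonempty
  refine ⟨t, h t ⟨by linarith [ht.1.1, min_le_left δ 1], ht.1.2⟩, fun hmem => ht.2 ⟨ht.1, hmem⟩⟩

lemma rightVal_unique {H : ℂ → ℕ} {x : ℂ} {a b : ℕ}
    (ha : rightVal H x a) (hb : rightVal H x b) : a = b := by
  obtain ⟨δ1, hδ1, h1⟩ := ha
  obtain ⟨δ2, hδ2, h2⟩ := hb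
  have ht : 0 < min δ1 δ2 / 2 := by positivity
  rw [← h1 _ ht (by linarith [min_le_left δ1 δ2]),
    ← h2 _ ht (by linarith [min_le_right δ1 δ2])]


/-- any decomposition of a function equal, off a finite set, to a
properly u.s.c. `G` has at least `G* − G_* + τ(G)` signals whose boundary trace
has exactly two elements. -/
theorem stmt10 {n : ℕ} (v : Fin n → ℂ × ℝ) (hr : ∀ i, 0 < (v i).2)
    (G : ℂ → ℕ) (hG : ProperlyUSC G)
    (hfin : {x ∈ S1 | Hsum v x ≠ G x}.Finite) :
    maxOnS1 G - minOnS1 G + tau G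
      ≤ Nat.card {i : Fin n // (bTrace (v i).1 (v i).2).ncard = 2} := by
  classical
  -- total choice of one-sided values of G
  have hG' : ∀ x : ℂ, ∃ a b : ℕ, x ∈ S1 → rightVal G x a ∧ leftVal G x b ∧ G x = max a b := by
    intro x
    by_cases h : x ∈ S1
    · obtain ⟨a, b, h1, h2, h3⟩ := hG x h; exact ⟨a, b, fun _ => ⟨h1, h2, h3⟩⟩
    · exact ⟨0, 0, fun hx => absurd hx h⟩
  choose aa bb hab using hG'
  -- total choice of one-sided values of signals
  choose ep hep1 hepev using fun (i : Fin n) (x : ℂ) => sig_right (v i).1 (v i).2 (hr i) x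
  choose em hem1 hemev using fun (i : Fin n) (x : ℂ) => sig_left (v i).1 (v i).2 (hr i) x
  -- bridging: G's one sided values are sums of the signals' one-sided values
  have key_a : ∀ x ∈ S1, aa x = ∑ i, ep i x := by
    intro x hx
    obtain ⟨δG, hδG, hG1⟩ := (hab x hx).1
    have hev : ∀ᶠ t in 𝓝[>] (0:ℝ),
        (G (rot t x) = aa x ∧ Hsum v (rot t x) = ∑ i, ep i x) := by
      apply Filter.Eventually.and
      · exact ev_right_iff.2 ⟨δG, hδG, fun t ht => hG1 t ht.1 ht.2⟩
      · have h' : ∀ᶠ t in 𝓝[>] (0:ℝ), ∀ i, signal (v i).1 (v i).2 (rot t x) = ep i x :=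
          Filter.eventually_all.2 fun i => hepev i x hx
        filter_upwards [h'] with t ht
        exact Finset.sum_congr rfl fun i _ => ht i
    obtain ⟨t, ⟨hGt, hHt⟩, hnb⟩ := exists_good x hx _ hfin hev
    have heq : Hsum v (rot t x) = G (rot t x) := by
      by_contra hne
      exact hnb ⟨rot_mem_S1 t x hx, hne⟩
    rw [hGt, hHt] at heq
    omega
  have key_b : ∀ x ∈ S1, bb x = ∑ i, em i x := by
    intro x hx
    obtain ⟨δG, hδG, hG1⟩ := (hab x hx).2.1
    have hev : ∀ᶠ t in 𝓝[<] (0:ℝ),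
        (G (rot t x) = bb x ∧ Hsum v (rot t x) = ∑ i, em i x) := by
      apply Filter.Eventually.and
      · exact ev_left_iff.2 ⟨δG, hδG, fun t ht => hG1 t ht.1 ht.2⟩
      · have h' : ∀ᶠ t in 𝓝[<] (0:ℝ), ∀ i, signal (v i).1 (v i).2 (rot t x) = em i x :=
          Filter.eventually_all.2 fun i => hemev i x hx
        filter_upwards [h'] with t ht
        exact Finset.sum_congr rfl fun i _ => ht i
    obtain ⟨t, ⟨hGt, hHt⟩, hnb⟩ := exists_good_left x hx _ hfin hev
    have heq : Hsum v (rot t x) = G (rot t x) := by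
      by_contra hne
      exact hnb ⟨rot_mem_S1 t x hx, hne⟩
    rw [hGt, hHt] at heq
    omega
  have hGmax : ∀ x ∈ S1, G x = max (aa x) (bb x) := fun x hx => (hab x hx).2.2
  -- G is bounded by n on S1
  have hGboundn : ∀ x ∈ S1, G x ≤ n := by
    intro x hx
    have h1 : aa x ≤ n := by
      rw [key_a x hx]
      calc ∑ i, ep i x ≤ ∑ _i : Fin n, 1 := Finset.sum_le_sum fun i _ => hep1 i x
        _ = n := by simp
    have h2 : bb x ≤ n := by
      rw [key_b x hx]
      calc ∑ i, em i x ≤ ∑ _i : Fin n, 1 := Finset.sum_le_sum fun i _ => hem1 i x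
        _ = n := by simp
    rw [hGmax x hx]
    omega
  -- max and min are attained
  have hS1ne : (G '' S1).Nonempty := ⟨G 1, 1, by simp [S1], rfl⟩
  have hbdd : BddAbove (G '' S1) := by
    refine ⟨n, ?_⟩
    rintro gv ⟨x, hx, rfl⟩
    exact hGboundn x hx
  obtain ⟨xM, hxM, hxMv0⟩ := Nat.sSup_mem hS1ne hbdd
  obtain ⟨xm, hxm, hxmv0⟩ := Nat.sInf_mem hS1ne
  have hxMv : G xM = maxOnS1 G := hxMv0
  have hxmv : G xm = minOnS1 G := hxmv0
  -- down-jump sets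
  set D : Fin n → Set ℂ := fun i => {y | y ∈ S1 ∧ em i y = 1 ∧ ep i y = 0} with hD
  have hDkey : ∀ i, ∀ y ∈ D i,
      y = djpt (v i).1 (v i).2 ∧ (bTrace (v i).1 (v i).2).ncard = 2 := by
    intro i y hy
    apply downjump (v i).1 (v i).2 (hr i) y hy.1
    · have h := hemev i y hy.1
      rw [hy.2.1] at h
      exact h
    · have h := hepev i y hy.1
      rw [hy.2.2] at h
      exact h
  have hDsub : ∀ i, (D i).Subsingleton := fun i y hy z hz => by
    rw [(hDkey i y hy).1, (hDkey i z hz).1]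
  have hDfin : ∀ i, (D i).Finite := fun i => (hDsub i).finite
  set Jd := {y | y ∈ S1 ∧ aa y < bb y} with hJd
  have hJdsub : Jd ⊆ ⋃ i, D i := by
    intro y hy
    obtain ⟨hyS, hyab⟩ := hy
    rw [key_a y hyS, key_b y hyS] at hyab
    have hex : ∃ i, ep i y < em i y := by
      by_contra hno
      push_neg at hno
      exact absurd (Finset.sum_le_sum fun i (_ : i ∈ Finset.univ) => hno i) (not_le.2 hyab)
    obtain ⟨i, hi⟩ := hex
    have h1 := hem1 i y
    have h2 := hep1 i y
    exact Set.mem_iUnion.2 ⟨i, hyS, by omega, by omega⟩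
  have hJdfin : Jd.Finite := (Set.Finite.subset (Set.finite_iUnion hDfin) hJdsub)
  set Jf := hJdfin.toFinset with hJf
  -- per-level bound
  have hlevel : ∀ k ∈ Finset.Icc (minOnS1 G + 1) (maxOnS1 G),
      numCC (superlevel G k) ≤ (Jf.filter fun y => aa y < k ∧ k ≤ G y).card ∧
      1 ≤ numCC (superlevel G k) := by
    intro k hk
    rw [Finset.mem_Icc] at hk
    set A := superlevel G k with hA
    have hAx : xM ∈ A := ⟨hxM, by rw [hxMv]; exact hk.2⟩
    have hkmin : ∃ x0 ∈ S1, G x0 < k := ⟨xm, hxm, by omega⟩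
    have hsel : ∀ x ∈ A, ∃ y, y ∈ connectedComponentIn A x ∧ aa y < k := by
      intro x hx
      obtain ⟨y, hyC, ay, hray, hayk⟩ := drop_exists G hG k hkmin x hx
      have hyS1 : y ∈ S1 := ((connectedComponentIn_subset A x) hyC).1
      have huniq : aa y = ay := rightVal_unique (hab y hyS1).1 hray
      exact ⟨y, hyC, by omega⟩
    set sel : Set ℂ → ℂ := fun Cs => if h : ∃ y, y ∈ Cs ∧ aa y < k then h.choose else 0
      with hseldef
    have hselC : ∀ x, x ∈ A → sel (connectedComponentIn A x) ∈ connectedComponentIn A x ∧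
        aa (sel (connectedComponentIn A x)) < k := by
      intro x hx
      have h := hsel x hx
      simp only [hseldef, dif_pos h]
      exact h.choose_spec
    have hJmem : ∀ x, x ∈ A →
        sel (connectedComponentIn A x) ∈ Jf.filter fun y => aa y < k ∧ k ≤ G y := by
      intro x hx
      obtain ⟨hyC, hyk⟩ := hselC x hx
      have hyA := connectedComponentIn_subset A x hyC
      have hyS1 := hyA.1
      have hyG : k ≤ G (sel (connectedComponentIn A x)) := hyA.2
      rw [Finset.mem_filter]
      refine ⟨?_, hyk, hyG⟩
      rw [hJf, Set.Finite.mem_toFinset]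
      refine ⟨hyS1, ?_⟩
      have hmx := hGmax _ hyS1
      rcases le_or_gt (bb (sel (connectedComponentIn A x))) (aa (sel (connectedComponentIn A x)))
        with hle | hlt
      · rw [max_eq_left hle] at hmx; omega
      · exact hlt
    -- the injection from components
    have hwd : ∀ (p q : ↥A), connectedComponent p = connectedComponent q →
        sel (connectedComponentIn A ↑p) = sel (connectedComponentIn A ↑q) := by
      intro p q hcc
      have himg : connectedComponentIn A ↑p = connectedComponentIn A ↑q := by
        rw [connectedComponentIn_eq_image p.2, connectedComponentIn_eq_image q.2]
        exact congrArg (Set.image Subtype.val) hcc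
      rw [himg]
    set F : ConnectedComponents ↥A → ℂ :=
      Quotient.lift (fun p : ↥A => sel (connectedComponentIn A ↑p))
        (fun p q h => hwd p q h) with hF
    have hFmk : ∀ p : ↥A, F (ConnectedComponents.mk p) = sel (connectedComponentIn A ↑p) :=
      fun p => rfl
    have hFmem : ∀ q, F q ∈ Jf.filter fun y => aa y < k ∧ k ≤ G y := by
      intro q
      obtain ⟨p, rfl⟩ := ConnectedComponents.surjective_coe q
      rw [hFmk]
      exact hJmem ↑p p.2
    have hFinj : Function.Injective F := by
      intro q1 q2 heq
      obtain ⟨p1, rfl⟩ := ConnectedComponents.surjective_coe q1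
      obtain ⟨p2, rfl⟩ := ConnectedComponents.surjective_coe q2
      rw [hFmk, hFmk] at heq
      have h1 := (hselC ↑p1 p1.2).1
      have h2 := (hselC ↑p2 p2.2).1
      rw [heq] at h1
      have e1 := connectedComponentIn_eq h1
      have e2 := connectedComponentIn_eq h2
      have hCeq : connectedComponentIn A ↑p1 = connectedComponentIn A ↑p2 := by
        rw [e1, ← e2]
      rw [connectedComponentIn_eq_image p1.2, connectedComponentIn_eq_image p2.2] at hCeq
      apply ConnectedComponents.coe_eq_coe.2
      exact Set.image_injective.2 Subtype.val_injective hCeq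
    set tgt := Jf.filter fun y => aa y < k ∧ k ≤ G y with htgt
    set F' : ConnectedComponents ↥A → {y // y ∈ tgt} := fun q => ⟨F q, hFmem q⟩ with hF'
    have hF'inj : Function.Injective F' := by
      intro q1 q2 h
      exact hFinj (congrArg Subtype.val h)
    have hfinCC : Finite (ConnectedComponents ↥A) := Finite.of_injective F' hF'inj
    constructor
    · calc numCC A = Nat.card (ConnectedComponents ↥A) := rfl
        _ ≤ Nat.card {y // y ∈ tgt} := Nat.card_le_card_of_injective F' hF'inj
        _ = tgt.card := by rw [Nat.card_eq_fintype_card, Fintype.card_coe]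
    · have : Nonempty (ConnectedComponents ↥A) := ⟨ConnectedComponents.mk ⟨xM, hAx⟩⟩
      exact Nat.card_pos
  -- assemble
  have hminmax : minOnS1 G ≤ maxOnS1 G := by
    have h1 : minOnS1 G ≤ G xM := Nat.sInf_le ⟨xM, hxM, rfl⟩
    omega
  set Ic := Finset.Icc (minOnS1 G + 1) (maxOnS1 G) with hIc
  have sum1 : maxOnS1 G - minOnS1 G + tau G = ∑ k ∈ Ic, numCC (superlevel G k) := by
    rw [tau, ← hIc]
    have hcard : Ic.card = maxOnS1 G - minOnS1 G := by rw [hIc, Nat.card_Icc]; omega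
    calc maxOnS1 G - minOnS1 G + ∑ k ∈ Ic, (numCC (superlevel G k) - 1)
        = ∑ _k ∈ Ic, 1 + ∑ k ∈ Ic, (numCC (superlevel G k) - 1) := by
          rw [Finset.sum_const, smul_eq_mul, mul_one, hcard]
      _ = ∑ k ∈ Ic, (1 + (numCC (superlevel G k) - 1)) := by rw [Finset.sum_add_distrib]
      _ = ∑ k ∈ Ic, numCC (superlevel G k) := by
          apply Finset.sum_congr rfl
          intro k hkk
          have := (hlevel k hkk).2
          omega
  have sum2 : ∑ k ∈ Ic, numCC (superlevel G k) ≤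
      ∑ k ∈ Ic, (Jf.filter fun y => aa y < k ∧ k ≤ G y).card :=
    Finset.sum_le_sum fun k hkk => (hlevel k hkk).1
  have sum3 : ∑ k ∈ Ic, (Jf.filter fun y => aa y < k ∧ k ≤ G y).card =
      ∑ y ∈ Jf, (Ic.filter fun k => aa y < k ∧ k ≤ G y).card := by
    simp_rw [Finset.card_filter]
    exact Finset.sum_comm
  have sum4 : ∑ y ∈ Jf, (Ic.filter fun k => aa y < k ∧ k ≤ G y).card ≤
      ∑ y ∈ Jf, ∑ i, (if y ∈ D i then 1 else 0) := by
    apply Finset.sum_le_sum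
    intro y hy
    have hcard1 : (Ic.filter fun k => aa y < k ∧ k ≤ G y).card ≤ G y - aa y := by
      have hsub : (Ic.filter fun k => aa y < k ∧ k ≤ G y) ⊆ Finset.Icc (aa y + 1) (G y) := by
        intro k hkk
        rw [Finset.mem_filter] at hkk
        rw [Finset.mem_Icc]
        omega
      calc (Ic.filter fun k => aa y < k ∧ k ≤ G y).card
          ≤ (Finset.Icc (aa y + 1) (G y)).card := Finset.card_le_card hsub
        _ = G y - aa y := by rw [Nat.card_Icc]; omega
    have hyJd : y ∈ Jd := by rwa [hJf, Set.Finite.mem_toFinset] at hy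
    obtain ⟨hyS, hyab⟩ := hyJd
    have hgy : G y = bb y := by rw [hGmax y hyS]; exact max_eq_right hyab.le
    have h2 : bb y - aa y ≤ ∑ i, (if y ∈ D i then 1 else 0) := by
      rw [key_a y hyS, key_b y hyS]
      have hpt : ∀ i, em i y ≤ ep i y + (if y ∈ D i then 1 else 0) := by
        intro i
        have h1 := hem1 i y
        have h2 := hep1 i y
        by_cases hcase : y ∈ D i
        · rw [if_pos hcase]; omega
        · rw [if_neg hcase, add_zero]
          by_contra hlt
          push_neg at hlt
          exact hcase ⟨hyS, by omega, by omega⟩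
      have hsum := Finset.sum_le_sum fun i (_ : i ∈ Finset.univ) => hpt i
      rw [Finset.sum_add_distrib] at hsum
      omega
    omega
  have sum5 : ∑ y ∈ Jf, ∑ i, (if y ∈ D i then (1:ℕ) else 0) =
      ∑ i, ∑ y ∈ Jf, (if y ∈ D i then (1:ℕ) else 0) := Finset.sum_comm
  have sum6 : ∑ i : Fin n, ∑ y ∈ Jf, (if y ∈ D i then (1:ℕ) else 0) ≤
      ∑ i : Fin n, (if (bTrace (v i).1 (v i).2).ncard = 2 then (1:ℕ) else 0) := by
    apply Finset.sum_le_sum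
    intro i _
    by_cases hD2 : ∃ y ∈ Jf, y ∈ D i
    · obtain ⟨y0, hy0f, hy0D⟩ := hD2
      rw [if_pos (hDkey i y0 hy0D).2]
      rw [← Finset.card_filter]
      apply Finset.card_le_one.2 _
      intro a ha b hb
      rw [Finset.mem_filter] at ha hb
      exact hDsub i ha.2 hb.2
    · push_neg at hD2
      have hz : ∀ y ∈ Jf, (if y ∈ D i then (1:ℕ) else 0) = 0 := fun y hy => if_neg (hD2 y hy)
      rw [Finset.sum_congr rfl hz]
      simp
  have sum7 : ∑ i : Fin n, (if (bTrace (v i).1 (v i).2).ncard = 2 then (1:ℕ) else 0) =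
      Nat.card {i : Fin n // (bTrace (v i).1 (v i).2).ncard = 2} := by
    rw [Nat.card_eq_fintype_card, Fintype.card_subtype, Finset.card_filter]
  omega
end
end
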